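/- arXiv:1302.1634 — 4 statements merged into one kernel-verified Lean document; each statement's English description precedes it below -/
import Mathlib

section
/- For any two graphons U and W and any finite simple graph F, |t(F,U) − t(F,W)| ≤ e(F) · ‖U − W‖_□, where e(F) is the number of edges of F. -/
open MeasureTheory Finset
open scoped unitInterval

noncomputable section

/-- The cut norm of a kernel `W : [0,1]² → ℝ`, in its functional form:
`‖W‖_□ = sup_{u,v : [0,1] → [0,1]} |∫ W(x,y) u(x) v(y)|`. -/
def cutNorm (W : I → I → ℝ) : ℝ :=
  sSup {r : ℝ | ∃ u v : I → ℝ, Measurable u ∧ Measurable v ∧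
      (∀ t, u t ∈ Set.Icc (0:ℝ) 1) ∧ (∀ t, v t ∈ Set.Icc (0:ℝ) 1) ∧
      r = |∫ p : I × I, W p.1 p.2 * u p.1 * v p.2|}

/-- Homomorphism density of a finite simple graph `G` on `Fin n` in a kernel `W`. -/
def homDensity {n : ℕ} (G : SimpleGraph (Fin n)) [DecidableRel G.Adj]
    (W : I → I → ℝ) : ℝ :=
  ∫ x : Fin n → I,
    ∏ p ∈ Finset.univ.filter (fun p : Fin n × Fin n => p.1 < p.2 ∧ G.Adj p.1 p.2),
      W (x p.1) (x p.2)

/-- A graphon: symmetric, measurable, `[0,1]`-valued. -/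
def IsGraphon (W : I → I → ℝ) : Prop :=
  Measurable (fun p : I × I => W p.1 p.2) ∧ (∀ x y, W x y = W y x) ∧
    ∀ x y, W x y ∈ Set.Icc (0:ℝ) 1

/-! ### Auxiliary lemmas -/

lemma CL.integrable_of_bdd {α : Type*} [MeasurableSpace α] {μ : Measure α} [IsFiniteMeasure μ]
    {f : α → ℝ} (hm : Measurable f) (h : ∀ x, |f x| ≤ 1) : Integrable f μ :=
  ⟨hm.aestronglyMeasurable,
    HasFiniteIntegral.of_bounded (C := 1) (ae_of_all _ (by simpa [Real.norm_eq_abs] using h))⟩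

lemma CL.cutNorm_bddAbove {D : I → I → ℝ} (hD : ∀ x y, |D x y| ≤ 1) :
    BddAbove {r : ℝ | ∃ u v : I → ℝ, Measurable u ∧ Measurable v ∧
      (∀ t, u t ∈ Set.Icc (0:ℝ) 1) ∧ (∀ t, v t ∈ Set.Icc (0:ℝ) 1) ∧
      r = |∫ p : I × I, D p.1 p.2 * u p.1 * v p.2|} := by
  refine ⟨1, ?_⟩
  rintro r ⟨u, v, hu, hv, hu1, hv1, rfl⟩
  have h1 : ∀ p : I × I, ‖D p.1 p.2 * u p.1 * v p.2‖ ≤ 1 := by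
    intro p
    rw [Real.norm_eq_abs, abs_mul, abs_mul]
    have hD1 := hD p.1 p.2
    have hup := hu1 p.1; have hvp := hv1 p.2
    rw [Set.mem_Icc] at hup hvp
    have hu' : |u p.1| ≤ 1 := abs_le.2 ⟨by linarith [hup.1], hup.2⟩
    have hv' : |v p.2| ≤ 1 := abs_le.2 ⟨by linarith [hvp.1], hvp.2⟩
    exact mul_le_one₀ (mul_le_one₀ hD1 (abs_nonneg _) hu') (abs_nonneg _) hv'
  calc |∫ p : I × I, D p.1 p.2 * u p.1 * v p.2|
      ≤ ∫ p : I × I, ‖D p.1 p.2 * u p.1 * v p.2‖ := by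
        rw [← Real.norm_eq_abs]; exact norm_integral_le_integral_norm _
    _ ≤ 1 := by
        by_cases hi : Integrable (fun p : I × I => ‖D p.1 p.2 * u p.1 * v p.2‖) volume
        · have h2 := integral_mono hi (integrable_const (1:ℝ)) h1
          simpa using h2
        · rw [integral_undef hi]; norm_num

lemma CL.le_cutNorm {D : I → I → ℝ} (hD : ∀ x y, |D x y| ≤ 1) {u v : I → ℝ}
    (hu : Measurable u) (hv : Measurable v) (hu1 : ∀ t, u t ∈ Set.Icc (0:ℝ) 1)
    (hv1 : ∀ t, v t ∈ Set.Icc (0:ℝ) 1) :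
    |∫ p : I × I, D p.1 p.2 * u p.1 * v p.2| ≤ cutNorm D :=
  le_csSup (CL.cutNorm_bddAbove hD) ⟨u, v, hu, hv, hu1, hv1, rfl⟩

lemma CL.cutNorm_nonneg {D : I → I → ℝ} (hD : ∀ x y, |D x y| ≤ 1) : 0 ≤ cutNorm D := by
  have h := CL.le_cutNorm hD (u := fun _ => 0) (v := fun _ => 0) measurable_const
    measurable_const (fun t => by norm_num [Set.mem_Icc]) (fun t => by norm_num [Set.mem_Icc])
  simpa using h

lemma CL.prodK_meas {n : ℕ} (K : Fin n × Fin n → I → I → ℝ) (E : Finset (Fin n × Fin n))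
    (h : ∀ p ∈ E, Measurable fun q : I × I => K p q.1 q.2) :
    Measurable fun x : Fin n → I => ∏ p ∈ E, K p (x p.1) (x p.2) :=
  Finset.measurable_prod _ fun p hp => by
    have h1 : Measurable fun x : Fin n → I => (x p.1, x p.2) :=
      (measurable_pi_apply p.1).prodMk (measurable_pi_apply p.2)
    exact (h p hp).comp h1

lemma CL.prodK_mem {n : ℕ} (K : Fin n × Fin n → I → I → ℝ) (E : Finset (Fin n × Fin n))
    (h : ∀ p ∈ E, ∀ x y, K p x y ∈ Set.Icc (0:ℝ) 1) (x : Fin n → I) :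
    (∏ p ∈ E, K p (x p.1) (x p.2)) ∈ Set.Icc (0:ℝ) 1 := by
  constructor
  · exact Finset.prod_nonneg fun p hp => (h p hp _ _).1
  · exact Finset.prod_le_one (fun p hp => (h p hp _ _).1) (fun p hp => (h p hp _ _).2)

/-- Key lemma: a single cut-norm bound with a context product over edges avoiding `{a,b}`. -/
lemma CL.key {n : ℕ} (a b : Fin n) (hab : a ≠ b) (D : I → I → ℝ)
    (hDm : Measurable fun q : I × I => D q.1 q.2) (hD1 : ∀ x y, |D x y| ≤ 1)
    (E : Finset (Fin n × Fin n)) (g : Fin n × Fin n → I → I → ℝ)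
    (hgm : ∀ p ∈ E, Measurable fun q : I × I => g p q.1 q.2)
    (hg1 : ∀ p ∈ E, ∀ x y, g p x y ∈ Set.Icc (0:ℝ) 1)
    (hEab : ∀ p ∈ E, p.1 ≠ p.2 ∧ ¬(p.1 = a ∧ p.2 = b) ∧ ¬(p.1 = b ∧ p.2 = a)) :
    |∫ x : Fin n → I, D (x a) (x b) * ∏ p ∈ E, g p (x p.1) (x p.2)| ≤ cutNorm D := by
  classical
  have hn : n ≠ 0 := by rintro rfl; exact a.elim0
  obtain ⟨m, rfl⟩ : ∃ m, n = m + 1 := ⟨n - 1, by omega⟩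
  obtain ⟨b', hb'⟩ := Fin.exists_succAbove_eq (Ne.symm hab)
  have hm : m ≠ 0 := by rintro rfl; exact b'.elim0
  obtain ⟨k, rfl⟩ : ∃ k, m = k + 1 := ⟨m - 1, by omega⟩
  -- the recombination map
  set X : I → I → (Fin k → I) → (Fin (k + 1 + 1) → I) :=
    fun s t z => a.insertNth s (b'.insertNth t z) with hX
  have hXa : ∀ s t z, X s t z a = s := by
    intro s t z
    simp only [hX]
    rw [Fin.insertNth_apply_same]
  have hXb : ∀ s t z, X s t z b = t := by
    intro s t z
    have h1 : X s t z (a.succAbove b') = t := by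
      simp only [hX]
      rw [Fin.insertNth_apply_succAbove, Fin.insertNth_apply_same]
    rwa [hb'] at h1
  have hX_ne_a : ∀ i, i ≠ a → ∀ s s' t z, X s t z i = X s' t z i := by
    intro i hia s s' t z
    obtain ⟨j, hj⟩ := Fin.exists_succAbove_eq hia
    simp only [hX]
    rw [← hj]
    rw [Fin.insertNth_apply_succAbove, Fin.insertNth_apply_succAbove]
  have hX_ne_b : ∀ i, i ≠ b → ∀ s t t' z, X s t z i = X s t' z i := by
    intro i hib s t t' z
    by_cases hia : i = a
    · subst hia; rw [hXa, hXa]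
    · obtain ⟨j, hj⟩ := Fin.exists_succAbove_eq hia
      have hjb : j ≠ b' := by
        rintro rfl; exact hib (by rw [← hj, hb'])
      obtain ⟨l, hl⟩ := Fin.exists_succAbove_eq hjb
      simp only [hX]
      rw [← hj]
      rw [Fin.insertNth_apply_succAbove, Fin.insertNth_apply_succAbove, ← hl,
        Fin.insertNth_apply_succAbove, Fin.insertNth_apply_succAbove]
  -- measurable equivalence
  set e1 := MeasurableEquiv.piFinSuccAbove (fun _ : Fin (k + 1 + 1) => I) a with he1
  set e2 := MeasurableEquiv.piFinSuccAbove (fun _ : Fin (k + 1) => I) b' with he2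
  set Φ : ((I × I) × (Fin k → I)) ≃ᵐ (Fin (k + 1 + 1) → I) :=
    (MeasurableEquiv.prodAssoc.trans
      ((MeasurableEquiv.refl I).prodCongr e2.symm)).trans e1.symm with hΦdef
  have hΦ : ∀ s t (z : Fin k → I), Φ ((s, t), z) = X s t z := by
    intro s t z
    simp only [hΦdef, hX]
    rfl
  have mpΦ : MeasurePreserving Φ volume volume := by
    have h1 : MeasurePreserving (MeasurableEquiv.prodAssoc :
        ((I × I) × (Fin k → I)) ≃ᵐ (I × (I × (Fin k → I)))) volume volume :=
      volume_preserving_prodAssoc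
    have h2 : MeasurePreserving ((MeasurableEquiv.refl I).prodCongr e2.symm) volume volume :=
      (MeasurePreserving.id volume).prod
        (MeasurePreserving.symm e2 (volume_preserving_piFinSuccAbove _ b'))
    have h3 : MeasurePreserving e1.symm volume volume :=
      MeasurePreserving.symm e1 (volume_preserving_piFinSuccAbove _ a)
    exact h3.comp (h2.comp h1)
  set f : (Fin (k + 1 + 1) → I) → ℝ :=
    fun x => D (x a) (x b) * ∏ p ∈ E, g p (x p.1) (x p.2) with hf
  have hfmeas : Measurable f := by
    have h1 : Measurable fun x : Fin (k + 1 + 1) → I => (x a, x b) :=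
      (measurable_pi_apply a).prodMk (measurable_pi_apply b)
    exact (hDm.comp h1).mul (CL.prodK_meas g E hgm)
  have hfbd : ∀ x, |f x| ≤ 1 := by
    intro x
    rw [hf, abs_mul]
    have h1 := hD1 (x a) (x b)
    have h2 := CL.prodK_mem g E hg1 x
    rw [Set.mem_Icc] at h2
    have h3 : |∏ p ∈ E, g p (x p.1) (x p.2)| ≤ 1 := abs_le.2 ⟨by linarith [h2.1], h2.2⟩
    have := abs_nonneg (D (x a) (x b))
    nlinarith
  have hint : Integrable f volume := CL.integrable_of_bdd hfmeas hfbd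
  have hcomp : ∫ x : Fin (k + 1 + 1) → I, f x = ∫ w : (I × I) × (Fin k → I), f (Φ w) :=
    (mpΦ.integral_comp Φ.measurableEmbedding f).symm
  have hintc : Integrable (fun w : (I × I) × (Fin k → I) => f (Φ w))
      ((volume : Measure (I × I)).prod (volume : Measure (Fin k → I))) :=
    CL.integrable_of_bdd (hfmeas.comp Φ.measurable) (fun w => hfbd _)
  have hfub : ∫ w : (I × I) × (Fin k → I), f (Φ w)
      = ∫ z : Fin k → I, ∫ q : I × I, f (Φ (q, z)) :=
    integral_prod_symm _ hintc
  -- split the product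
  set c0 : I := 0 with hc0
  set u : (Fin k → I) → I → ℝ :=
    fun z s => ∏ p ∈ E.filter (fun p => p.1 ≠ b ∧ p.2 ≠ b),
      g p (X s c0 z p.1) (X s c0 z p.2) with hu
  set v : (Fin k → I) → I → ℝ :=
    fun z t => ∏ p ∈ E.filter (fun p => ¬(p.1 ≠ b ∧ p.2 ≠ b)),
      g p (X c0 t z p.1) (X c0 t z p.2) with hv
  have hsplit : ∀ s t z,
      (∏ p ∈ E, g p (X s t z p.1) (X s t z p.2)) = u z s * v z t := by
    intro s t z
    rw [← Finset.prod_filter_mul_prod_filter_not E (fun p => p.1 ≠ b ∧ p.2 ≠ b)]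
    congr 1
    · refine Finset.prod_congr rfl fun p hp => ?_
      obtain ⟨h1, h2⟩ := (Finset.mem_filter.mp hp).2
      rw [hX_ne_b _ h1 s t c0 z, hX_ne_b _ h2 s t c0 z]
    · refine Finset.prod_congr rfl fun p hp => ?_
      have hpE := (Finset.mem_filter.mp hp).1
      have hnb := (Finset.mem_filter.mp hp).2
      obtain ⟨hne, hnab, hnba⟩ := hEab p hpE
      push_neg at hnb
      have h1a : p.1 ≠ a ∧ p.2 ≠ a := by
        by_cases hb1 : p.1 = b
        · refine ⟨by rw [hb1]; exact Ne.symm hab, fun h2 => hnba ⟨hb1, h2⟩⟩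
        · have hb2 : p.2 = b := hnb hb1
          exact ⟨fun h1 => hnab ⟨h1, hb2⟩, by rw [hb2]; exact Ne.symm hab⟩
      rw [hX_ne_a _ h1a.1 s c0 t z, hX_ne_a _ h1a.2 s c0 t z]
  have hXmeas_s : ∀ t z, Measurable fun s => X s t z := by
    intro t z
    have h1 : (fun s => X s t z) = fun s => Φ ((s, t), z) := by
      funext s; rw [hΦ]
    rw [h1]
    exact Φ.measurable.comp ((measurable_id.prodMk measurable_const).prodMk measurable_const)
  have hXmeas_t : ∀ s z, Measurable fun t => X s t z := by
    intro s z
    have h1 : (fun t => X s t z) = fun t => Φ ((s, t), z) := by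
      funext t; rw [hΦ]
    rw [h1]
    exact Φ.measurable.comp ((measurable_const.prodMk measurable_id).prodMk measurable_const)
  have humeas : ∀ z, Measurable (u z) := by
    intro z
    refine Finset.measurable_prod _ fun p hp => ?_
    have hpE := Finset.mem_filter.mp hp |>.1
    exact (hgm p hpE).comp
      (((measurable_pi_apply p.1).comp (hXmeas_s c0 z)).prodMk
        ((measurable_pi_apply p.2).comp (hXmeas_s c0 z)))
  have hvmeas : ∀ z, Measurable (v z) := by
    intro z
    refine Finset.measurable_prod _ fun p hp => ?_
    have hpE := Finset.mem_filter.mp hp |>.1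
    exact (hgm p hpE).comp
      (((measurable_pi_apply p.1).comp (hXmeas_t c0 z)).prodMk
        ((measurable_pi_apply p.2).comp (hXmeas_t c0 z)))
  have hu1 : ∀ z s, u z s ∈ Set.Icc (0:ℝ) 1 := by
    intro z s
    refine ⟨Finset.prod_nonneg fun p hp => ?_, Finset.prod_le_one (fun p hp => ?_) (fun p hp => ?_)⟩
    · exact (hg1 p (Finset.mem_filter.mp hp).1 _ _).1
    · exact (hg1 p (Finset.mem_filter.mp hp).1 _ _).1
    · exact (hg1 p (Finset.mem_filter.mp hp).1 _ _).2
  have hv1 : ∀ z t, v z t ∈ Set.Icc (0:ℝ) 1 := by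
    intro z t
    refine ⟨Finset.prod_nonneg fun p hp => ?_, Finset.prod_le_one (fun p hp => ?_) (fun p hp => ?_)⟩
    · exact (hg1 p (Finset.mem_filter.mp hp).1 _ _).1
    · exact (hg1 p (Finset.mem_filter.mp hp).1 _ _).1
    · exact (hg1 p (Finset.mem_filter.mp hp).1 _ _).2
  have hzbound : ∀ z : Fin k → I, ‖∫ q : I × I, f (Φ (q, z))‖ ≤ cutNorm D := by
    intro z
    have h1 : (fun q : I × I => f (Φ (q, z)))
        = fun q : I × I => D q.1 q.2 * u z q.1 * v z q.2 := by
      funext q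
      obtain ⟨s, t⟩ := q
      rw [hΦ, hf]
      simp only
      rw [hXa, hXb, hsplit]
      ring
    rw [h1, Real.norm_eq_abs]
    exact CL.le_cutNorm hD1 (humeas z) (hvmeas z) (hu1 z) (hv1 z)
  -- combine
  rw [hcomp, hfub]
  have hG : Integrable (fun z : Fin k → I => ∫ q : I × I, f (Φ (q, z))) volume :=
    hintc.integral_prod_right
  calc |∫ z : Fin k → I, ∫ q : I × I, f (Φ (q, z))|
      ≤ ∫ z : Fin k → I, ‖∫ q : I × I, f (Φ (q, z))‖ := by
        rw [← Real.norm_eq_abs]; exact norm_integral_le_integral_norm _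
    _ ≤ ∫ _z : Fin k → I, cutNorm D := integral_mono hG.norm (integrable_const _)
        (fun z => hzbound z)
    _ = cutNorm D := by simp

/-- Telescoping lemma with a mixed context. -/
lemma CL.tel {n : ℕ} (U W : I → I → ℝ) (hU : IsGraphon U) (hW : IsGraphon W)
    (E : Finset (Fin n × Fin n)) :
    ∀ (_ : ∀ p ∈ E, p.1 < p.2) (C : Finset (Fin n × Fin n))
      (g : Fin n × Fin n → I → I → ℝ),
      (∀ p ∈ C, p.1 < p.2) → Disjoint E C →
      (∀ p ∈ C, Measurable (fun q : I × I => g p q.1 q.2)) →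
      (∀ p ∈ C, ∀ x y, g p x y ∈ Set.Icc (0:ℝ) 1) →
      |(∫ x : Fin n → I, (∏ p ∈ C, g p (x p.1) (x p.2)) * ∏ p ∈ E, U (x p.1) (x p.2)) -
          ∫ x : Fin n → I, (∏ p ∈ C, g p (x p.1) (x p.2)) * ∏ p ∈ E, W (x p.1) (x p.2)|
        ≤ (E.card : ℝ) * cutNorm (fun x y => U x y - W x y) := by
  classical
  induction E using Finset.induction_on with
  | empty => intro _ C g hC hdis hgm hg1; simp
  | @insert e E he ih =>
    intro hE C g hC hdis hgm hg1
    have heC : e ∉ C ∧ Disjoint E C := by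
      rw [Finset.disjoint_insert_left] at hdis; exact hdis
    have he12 : e.1 < e.2 := hE e (Finset.mem_insert_self e E)
    have hE' : ∀ p ∈ E, p.1 < p.2 := fun p hp => hE p (Finset.mem_insert_of_mem hp)
    set D : I → I → ℝ := fun x y => U x y - W x y with hD
    have hDm : Measurable fun q : I × I => D q.1 q.2 := hU.1.sub hW.1
    have hD1 : ∀ x y, |D x y| ≤ 1 := by
      intro x y
      have h1 := hU.2.2 x y; have h2 := hW.2.2 x y
      rw [Set.mem_Icc] at h1 h2
      rw [hD]; rw [abs_le]; constructor <;> simp <;> linarith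
    -- notation
    set M : (Fin n → I) → ℝ := fun x => ∏ p ∈ C, g p (x p.1) (x p.2) with hM
    set PU : (Fin n → I) → ℝ := fun x => ∏ p ∈ E, U (x p.1) (x p.2) with hPU
    set PW : (Fin n → I) → ℝ := fun x => ∏ p ∈ E, W (x p.1) (x p.2) with hPW
    have hMmeas : Measurable M := CL.prodK_meas g C hgm
    have hM01 : ∀ x, M x ∈ Set.Icc (0:ℝ) 1 := CL.prodK_mem g C hg1
    have hPUmeas : Measurable PU := CL.prodK_meas (fun _ => U) E (fun p _ => hU.1)
    have hPU01 : ∀ x, PU x ∈ Set.Icc (0:ℝ) 1 := CL.prodK_mem _ E (fun p _ => hU.2.2)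
    have hPWmeas : Measurable PW := CL.prodK_meas (fun _ => W) E (fun p _ => hW.1)
    have hPW01 : ∀ x, PW x ∈ Set.Icc (0:ℝ) 1 := CL.prodK_mem _ E (fun p _ => hW.2.2)
    have hpair : Measurable fun x : Fin n → I => (x e.1, x e.2) :=
      (measurable_pi_apply e.1).prodMk (measurable_pi_apply e.2)
    have hUemeas : Measurable fun x : Fin n → I => U (x e.1) (x e.2) := hU.1.comp hpair
    have hWemeas : Measurable fun x : Fin n → I => W (x e.1) (x e.2) := hW.1.comp hpair
    have mul01 : ∀ r s : ℝ, r ∈ Set.Icc (0:ℝ) 1 → s ∈ Set.Icc (0:ℝ) 1 →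
        r * s ∈ Set.Icc (0:ℝ) 1 := by
      intro r s h1 h2
      rw [Set.mem_Icc] at *
      constructor
      · exact mul_nonneg h1.1 h2.1
      · nlinarith [h1.1, h1.2, h2.1, h2.2]
    have key01 : ∀ (K : (Fin n → I) → ℝ), (∀ x, K x ∈ Set.Icc (0:ℝ) 1) → ∀ x, |K x| ≤ 1 := by
      intro K hK x
      have := hK x; rw [Set.mem_Icc] at this
      exact abs_le.2 ⟨by linarith [this.1], this.2⟩
    -- the three integrals
    set A : ℝ := ∫ x : Fin n → I, M x * (U (x e.1) (x e.2) * PU x) with hA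
    set B : ℝ := ∫ x : Fin n → I, M x * (U (x e.1) (x e.2) * PW x) with hB
    set Cc : ℝ := ∫ x : Fin n → I, M x * (W (x e.1) (x e.2) * PW x) with hCc
    have hgoal : (∫ x : Fin n → I, M x * ∏ p ∈ insert e E, U (x p.1) (x p.2)) = A := by
      rw [hA]; congr 1; funext x; rw [Finset.prod_insert he]
    have hgoal2 : (∫ x : Fin n → I, M x * ∏ p ∈ insert e E, W (x p.1) (x p.2)) = Cc := by
      rw [hCc]; congr 1; funext x; rw [Finset.prod_insert he]
    rw [hgoal, hgoal2]
    -- first bound: |A - B| ≤ card E * cutNorm D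
    have hAB : |A - B| ≤ (E.card : ℝ) * cutNorm D := by
      have happ := ih hE' (insert e C) (Function.update g e U)
        (fun p hp => by
          rcases Finset.mem_insert.mp hp with h | h
          · subst h; exact he12
          · exact hC p h)
        (by
          rw [Finset.disjoint_insert_right]
          exact ⟨he, heC.2⟩)
        (fun p hp => by
          rcases Finset.mem_insert.mp hp with h | h
          · subst h; rw [Function.update_self]; exact hU.1
          · rw [Function.update_of_ne (fun hpe => heC.1 (by rw [← hpe]; exact h)) _ g]; exact hgm p h)
        (fun p hp => by
          rcases Finset.mem_insert.mp hp with h | h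
          · subst h; rw [Function.update_self]; exact hU.2.2
          · rw [Function.update_of_ne (fun hpe => heC.1 (by rw [← hpe]; exact h)) _ g]; exact hg1 p h)
      have hprodeq : ∀ x : Fin n → I,
          (∏ p ∈ insert e C, Function.update g e U p (x p.1) (x p.2))
            = M x * U (x e.1) (x e.2) := by
        intro x
        rw [Finset.prod_insert heC.1, Function.update_self]
        rw [hM]
        have : (∏ p ∈ C, Function.update g e U p (x p.1) (x p.2))
            = ∏ p ∈ C, g p (x p.1) (x p.2) := by
          refine Finset.prod_congr rfl fun p hp => ?_
          rw [Function.update_of_ne (fun hpe => heC.1 (by rw [← hpe]; exact hp)) _ g]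
        rw [this]; ring
      have h1 : (∫ x : Fin n → I,
            (∏ p ∈ insert e C, Function.update g e U p (x p.1) (x p.2)) *
              ∏ p ∈ E, U (x p.1) (x p.2)) = A := by
        rw [hA]; congr 1; funext x; rw [hprodeq x, hPU]; ring
      have h2 : (∫ x : Fin n → I,
            (∏ p ∈ insert e C, Function.update g e U p (x p.1) (x p.2)) *
              ∏ p ∈ E, W (x p.1) (x p.2)) = B := by
        rw [hB]; congr 1; funext x; rw [hprodeq x, hPW]; ring
      rw [h1, h2] at happ
      exact happ
    -- second bound: |B - Cc| ≤ cutNorm D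
    have hBC : |B - Cc| ≤ cutNorm D := by
      have hintB : Integrable (fun x : Fin n → I => M x * (U (x e.1) (x e.2) * PW x)) volume :=
        CL.integrable_of_bdd (hMmeas.mul (hUemeas.mul hPWmeas))
          (key01 _ (fun x => mul01 _ _ (hM01 x) (mul01 _ _ (hU.2.2 _ _) (hPW01 x))))
      have hintC : Integrable (fun x : Fin n → I => M x * (W (x e.1) (x e.2) * PW x)) volume :=
        CL.integrable_of_bdd (hMmeas.mul (hWemeas.mul hPWmeas))
          (key01 _ (fun x => mul01 _ _ (hM01 x) (mul01 _ _ (hW.2.2 _ _) (hPW01 x))))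
      set hfun : Fin n × Fin n → I → I → ℝ := fun p => if p ∈ E then W else g p with hhfun
      have hprodEC : ∀ x : Fin n → I,
          (∏ p ∈ E ∪ C, hfun p (x p.1) (x p.2)) = PW x * M x := by
        intro x
        rw [Finset.prod_union heC.2]
        congr 1
        · exact Finset.prod_congr rfl fun p hp => by rw [hhfun]; simp only [if_pos hp]
        · exact Finset.prod_congr rfl fun p hp => by
            rw [hhfun]
            simp only [if_neg (Finset.disjoint_right.mp heC.2 hp)]
      have heq : B - Cc = ∫ x : Fin n → I,
          D (x e.1) (x e.2) * ∏ p ∈ E ∪ C, hfun p (x p.1) (x p.2) := by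
        rw [hB, hCc, ← integral_sub hintB hintC]
        congr 1; funext x
        rw [hprodEC x, hD]
        simp only
        ring
      rw [heq]
      refine CL.key e.1 e.2 (Fin.ne_of_lt he12) D hDm hD1 (E ∪ C) hfun ?_ ?_ ?_
      · intro p hp
        rw [hhfun]
        by_cases hpE : p ∈ E
        · simp only [if_pos hpE]; exact hW.1
        · simp only [if_neg hpE]
          exact hgm p ((Finset.mem_union.mp hp).resolve_left hpE)
      · intro p hp
        rw [hhfun]
        by_cases hpE : p ∈ E
        · simp only [if_pos hpE]; exact hW.2.2
        · simp only [if_neg hpE]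
          exact hg1 p ((Finset.mem_union.mp hp).resolve_left hpE)
      · intro p hp
        have hp12 : p.1 < p.2 := by
          rcases Finset.mem_union.mp hp with h | h
          · exact hE' p h
          · exact hC p h
        refine ⟨Fin.ne_of_lt hp12, ?_, ?_⟩
        · rintro ⟨h1, h2⟩
          have hpe : p = e := Prod.ext h1 h2
          subst hpe
          rcases Finset.mem_union.mp hp with h | h
          · exact he h
          · exact heC.1 h
        · rintro ⟨h1, h2⟩
          rw [h1, h2] at hp12
          exact absurd he12 (lt_asymm hp12)
    calc |A - Cc| ≤ |A - B| + |B - Cc| := abs_sub_le A B Cc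
      _ ≤ (E.card : ℝ) * cutNorm D + cutNorm D := add_le_add hAB hBC
      _ = ((insert e E).card : ℝ) * cutNorm D := by
          rw [Finset.card_insert_of_notMem he]
          push_cast
          ring

/-- Counting lemma: for graphons `U`, `W` and any finite simple graph `F`,
`|t(F,U) − t(F,W)| ≤ e(F) · ‖U − W‖_□`. -/
theorem counting_lemma_graphons {n : ℕ} (F : SimpleGraph (Fin n)) [DecidableRel F.Adj]
    (U W : I → I → ℝ) (hU : IsGraphon U) (hW : IsGraphon W) :
    |homDensity F U - homDensity F W| ≤
      (F.edgeFinset.card : ℝ) * cutNorm (fun x y => U x y - W x y) := by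
  classical
  set E : Finset (Fin n × Fin n) :=
    Finset.univ.filter (fun p : Fin n × Fin n => p.1 < p.2 ∧ F.Adj p.1 p.2) with hEdef
  have hE : ∀ p ∈ E, p.1 < p.2 := fun p hp => ((Finset.mem_filter.mp hp).2).1
  have htel := CL.tel U W hU hW E hE ∅ (fun _ => U) (by simp) (Finset.disjoint_empty_right E)
    (by simp) (by simp)
  simp only [Finset.prod_empty, one_mul] at htel
  have h1 : homDensity F U = ∫ x : Fin n → I, ∏ p ∈ E, U (x p.1) (x p.2) := rfl
  have h2 : homDensity F W = ∫ x : Fin n → I, ∏ p ∈ E, W (x p.1) (x p.2) := rfl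
  rw [h1, h2]
  refine le_trans htel ?_
  have hD1 : ∀ x y, |U x y - W x y| ≤ 1 := by
    intro x y
    have ha := hU.2.2 x y; have hb := hW.2.2 x y
    rw [Set.mem_Icc] at ha hb
    rw [abs_le]; constructor <;> linarith
  have hcard : E.card ≤ F.edgeFinset.card := by
    apply Finset.card_le_card_of_injOn (fun p => s(p.1, p.2))
    · intro p hp
      rw [Finset.mem_coe, SimpleGraph.mem_edgeFinset, SimpleGraph.mem_edgeSet]
      exact ((Finset.mem_filter.mp hp).2).2
    · intro p hp q hq hpq
      have hp12 := hE p hp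
      have hq12 := hE q hq
      rw [Sym2.eq_iff] at hpq
      rcases hpq with ⟨h1, h2⟩ | ⟨h1, h2⟩
      · exact Prod.ext h1 h2
      · rw [h1, h2] at hp12
        exact absurd hq12 (lt_asymm hp12)
  have hcn : 0 ≤ cutNorm (fun x y => U x y - W x y) := CL.cutNorm_nonneg hD1
  exact mul_le_mul_of_nonneg_right (by exact_mod_cast hcard) hcn

end
end

section
/- Weak regularity lemma (Frieze–Kannan, analytic form): For every ε > 0 and every symmetric measurable function W : [0,1]² → [0,1], there exists a measurable partition Q of [0,1] into at most 2^{2/ε²} parts such that ‖W − W_Q‖_□ ≤ ε. -/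
open MeasureTheory Finset
open scoped unitInterval

set_option linter.unusedSectionVars false

noncomputable section

/-- A finite measurable partition of `[0,1]`. -/
def IsPartition {ι : Type*} (Q : ι → Set I) : Prop :=
  (∀ i, MeasurableSet (Q i)) ∧ Pairwise (Function.onFun Disjoint Q) ∧
    (⋃ i, Q i) = Set.univ

/-- The average of `W` over the product cell `Q i × Q j` (with value `0` on
cells of measure zero). -/
def cellAvg {ι : Type*} (W : I → I → ℝ) (Q : ι → Set I) (i j : ι) : ℝ :=
  if volume (Q i ×ˢ Q j) = 0 then 0
  else (∫ p : I × I in Q i ×ˢ Q j, W p.1 p.2) / (volume (Q i ×ˢ Q j)).toReal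

/-- The stepping `W_Q` of `W` with respect to the partition `Q`: on each product
cell `Q i × Q j` it takes the average value of `W` over that cell. -/
def stepFn {ι : Type*} [Fintype ι] (W : I → I → ℝ) (Q : ι → Set I) (x y : I) : ℝ :=
  ∑ i : ι, ∑ j : ι, Set.indicator (Q i ×ˢ Q j) (fun _ => cellAvg W Q i j) (x, y)

/-- The cut norm in its set form: `‖U‖_□ = sup_{S,T} |∫_{S×T} U|`. -/
def cutNormSets (U : I → I → ℝ) : ℝ :=
  sSup {r : ℝ | ∃ S T : Set I, MeasurableSet S ∧ MeasurableSet T ∧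
      r = |∫ p : I × I in S ×ˢ T, U p.1 p.2|}

namespace WeakReg

variable {ι : Type*} [Fintype ι] {W : I → I → ℝ} {Q : ι → Set I}

lemma integrable_of_bounded {f : I × I → ℝ} (hm : Measurable f) (C : ℝ)
    (h : ∀ p, |f p| ≤ C) : Integrable f := by
  refine (integrable_const C).mono' hm.aestronglyMeasurable (ae_of_all _ ?_)
  simpa [Real.norm_eq_abs] using h

lemma integrable_W (hm : Measurable fun p : I × I => W p.1 p.2)
    (hr : ∀ x y, W x y ∈ Set.Icc (0:ℝ) 1) :
    Integrable (fun p : I × I => W p.1 p.2) := by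
  refine integrable_of_bounded hm 1 fun p => ?_
  exact abs_le.2 ⟨by linarith [(hr p.1 p.2).1], (hr p.1 p.2).2⟩

lemma stepFn_apply (x y : I) :
    stepFn W Q x y
      = ∑ i : ι, ∑ j : ι, Set.indicator (Q i ×ˢ Q j) (fun _ => cellAvg W Q i j) (x, y) := rfl

lemma measurable_stepFn (hQm : ∀ i, MeasurableSet (Q i)) :
    Measurable (fun p : I × I => stepFn W Q p.1 p.2) := by
  have : (fun p : I × I => stepFn W Q p.1 p.2)
      = fun p : I × I => ∑ i : ι, ∑ j : ι,
          Set.indicator (Q i ×ˢ Q j) (fun _ => cellAvg W Q i j) p := rfl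
  rw [this]
  exact Finset.measurable_sum _ fun i _ => Finset.measurable_sum _ fun j _ =>
    measurable_const.indicator ((hQm i).prod (hQm j))

lemma integrable_stepFn (hQm : ∀ i, MeasurableSet (Q i)) :
    Integrable (fun p : I × I => stepFn W Q p.1 p.2) := by
  have : (fun p : I × I => stepFn W Q p.1 p.2)
      = fun p : I × I => ∑ i : ι, ∑ j : ι,
          Set.indicator (Q i ×ˢ Q j) (fun _ => cellAvg W Q i j) p := rfl
  rw [this]
  exact integrable_finset_sum _ fun i _ => integrable_finset_sum _ fun j _ =>
    (integrable_const _).indicator ((hQm i).prod (hQm j))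

lemma stepFn_eq_cellAvg (hQd : Pairwise (Function.onFun Disjoint Q)) {i j : ι} {x y : I}
    (hx : x ∈ Q i) (hy : y ∈ Q j) : stepFn W Q x y = cellAvg W Q i j := by
  unfold stepFn
  rw [Finset.sum_eq_single i]
  · rw [Finset.sum_eq_single j]
    · exact Set.indicator_of_mem (Set.mk_mem_prod hx hy) _
    · intro j' _ hj'
      refine Set.indicator_of_notMem (fun hmem => ?_) _
      exact Set.disjoint_left.mp (hQd hj') hmem.2 hy
    · exact fun h => absurd (Finset.mem_univ j) h
  · intro i' _ hi'
    refine Finset.sum_eq_zero fun j' _ => ?_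
    refine Set.indicator_of_notMem (fun hmem => ?_) _
    exact Set.disjoint_left.mp (hQd hi') hmem.1 hx
  · exact fun h => absurd (Finset.mem_univ i) h

lemma cellAvg_mem_Icc (hQm : ∀ i, MeasurableSet (Q i))
    (hm : Measurable fun p : I × I => W p.1 p.2)
    (hr : ∀ x y, W x y ∈ Set.Icc (0:ℝ) 1) (i j : ι) :
    cellAvg W Q i j ∈ Set.Icc (0:ℝ) 1 := by
  unfold cellAvg
  split_ifs with h
  · exact ⟨le_refl 0, zero_le_one⟩
  have hcell : MeasurableSet (Q i ×ˢ Q j) := (hQm i).prod (hQm j)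
  have hfin : volume (Q i ×ˢ Q j) ≠ ⊤ := measure_ne_top _ _
  have hpos : 0 < (volume (Q i ×ˢ Q j)).toReal := ENNReal.toReal_pos h hfin
  have h0 : 0 ≤ ∫ p : I × I in Q i ×ˢ Q j, W p.1 p.2 :=
    setIntegral_nonneg hcell fun p _ => (hr p.1 p.2).1
  have h1 : ∫ p : I × I in Q i ×ˢ Q j, W p.1 p.2 ≤ (volume (Q i ×ˢ Q j)).toReal := by
    calc ∫ p : I × I in Q i ×ˢ Q j, W p.1 p.2
        ≤ ∫ _p : I × I in Q i ×ˢ Q j, (1:ℝ) := by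
          refine setIntegral_mono_on ((integrable_W hm hr).integrableOn)
            (integrable_const 1).integrableOn hcell fun p _ => (hr p.1 p.2).2
      _ = (volume (Q i ×ˢ Q j)).toReal := by simp; rfl
  constructor
  · positivity
  · rw [div_le_one hpos]; exact h1

lemma setIntegral_stepFn_cell (hQ : IsPartition Q) (i j : ι) :
    ∫ p : I × I in Q i ×ˢ Q j, stepFn W Q p.1 p.2
      = ∫ p : I × I in Q i ×ˢ Q j, W p.1 p.2 := by
  by_cases h : volume (Q i ×ˢ Q j) = 0
  · rw [setIntegral_measure_zero _ h, setIntegral_measure_zero _ h]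
  · have hcell : MeasurableSet (Q i ×ˢ Q j) := (hQ.1 i).prod (hQ.1 j)
    have : ∫ p : I × I in Q i ×ˢ Q j, stepFn W Q p.1 p.2
        = ∫ _p : I × I in Q i ×ˢ Q j, cellAvg W Q i j := by
      refine setIntegral_congr_fun hcell fun p hp => ?_
      exact stepFn_eq_cellAvg hQ.2.1 hp.1 hp.2
    rw [this, setIntegral_const, cellAvg, if_neg h, smul_eq_mul]
    have hfin : volume (Q i ×ˢ Q j) ≠ ⊤ := measure_ne_top _ _
    have hpos : (volume (Q i ×ˢ Q j)).toReal ≠ 0 := (ENNReal.toReal_pos h hfin).ne'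
    field_simp
    rw [mul_comm]; rfl

end WeakReg

namespace WeakReg

variable {ι : Type*} [Fintype ι] {W : I → I → ℝ} {Q : ι → Set I}

lemma integral_sub_stepFn_biUnion (hQ : IsPartition Q)
    (hm : Measurable fun p : I × I => W p.1 p.2)
    (hr : ∀ x y, W x y ∈ Set.Icc (0:ℝ) 1) (A B : Finset ι) :
    ∫ p : I × I in (⋃ i ∈ A, Q i) ×ˢ (⋃ j ∈ B, Q j),
      (W p.1 p.2 - stepFn W Q p.1 p.2) = 0 := by
  have hset : (⋃ i ∈ A, Q i) ×ˢ (⋃ j ∈ B, Q j)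
      = ⋃ c ∈ A ×ˢ B, Q (Prod.fst c) ×ˢ Q (Prod.snd c) := by
    ext p
    simp only [Set.mem_prod, Set.mem_iUnion, Finset.mem_product]
    constructor
    · rintro ⟨⟨i, hi, hxi⟩, ⟨j, hj, hyj⟩⟩
      exact ⟨(i, j), ⟨hi, hj⟩, hxi, hyj⟩
    · rintro ⟨⟨i, j⟩, ⟨hi, hj⟩, hxi, hyj⟩
      exact ⟨⟨i, hi, hxi⟩, ⟨j, hj, hyj⟩⟩
  rw [hset]
  have hint : Integrable (fun p : I × I => W p.1 p.2 - stepFn W Q p.1 p.2) :=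
    (integrable_W hm hr).sub (integrable_stepFn hQ.1)
  rw [integral_biUnion_finset _ (fun c _ => (hQ.1 c.1).prod (hQ.1 c.2))
      ?_ (fun c _ => hint.integrableOn)]
  · refine Finset.sum_eq_zero fun c _ => ?_
    rw [integral_sub (integrable_W hm hr).integrableOn
      (integrable_stepFn hQ.1).integrableOn, setIntegral_stepFn_cell hQ, sub_self]
  · intro c _ c' _ hcc'
    rcases Prod.mk.injEq c.1 c.2 c'.1 c'.2 ▸ (fun h => hcc' h : ¬ c = c') with h
    by_cases h1 : c.1 = c'.1
    · have h2 : c.2 ≠ c'.2 := fun h2 => hcc' (Prod.ext h1 h2)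
      exact Set.Disjoint.set_prod_right (hQ.2.1 h2) _ _
    · exact Set.Disjoint.set_prod_left (hQ.2.1 h1) _ _

end WeakReg

namespace WeakReg

variable {ι κ : Type*} [Fintype ι] [Fintype κ] {W : I → I → ℝ} {Q : ι → Set I}

lemma exists_mem (hQ : IsPartition Q) (x : I) : ∃ i, x ∈ Q i := by
  have := hQ.2.2 ▸ Set.mem_univ x
  simpa [Set.mem_iUnion] using this

lemma stepFn_mem_Icc (hQ : IsPartition Q)
    (hm : Measurable fun p : I × I => W p.1 p.2)
    (hr : ∀ x y, W x y ∈ Set.Icc (0:ℝ) 1) (x y : I) :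
    stepFn W Q x y ∈ Set.Icc (0:ℝ) 1 := by
  obtain ⟨i, hi⟩ := exists_mem hQ x
  obtain ⟨j, hj⟩ := exists_mem hQ y
  rw [stepFn_eq_cellAvg hQ.2.1 hi hj]
  exact cellAvg_mem_Icc hQ.1 hm hr i j

/-- The `L²` energy of the step function. -/
def energy (W : I → I → ℝ) (Q : ι → Set I) : ℝ :=
  ∫ p : I × I, (stepFn W Q p.1 p.2) ^ 2

lemma energy_nonneg : 0 ≤ energy W Q :=
  integral_nonneg fun p => sq_nonneg _

lemma energy_le_one (hQ : IsPartition Q)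
    (hm : Measurable fun p : I × I => W p.1 p.2)
    (hr : ∀ x y, W x y ∈ Set.Icc (0:ℝ) 1) : energy W Q ≤ 1 := by
  have hb : ∀ p : I × I, (stepFn W Q p.1 p.2) ^ 2 ≤ 1 := by
    intro p
    have := stepFn_mem_Icc hQ hm hr p.1 p.2
    nlinarith [this.1, this.2]
  calc energy W Q ≤ ∫ _p : I × I, (1:ℝ) := by
        refine integral_mono ?_ (integrable_const 1) hb
        exact integrable_of_bounded (((measurable_stepFn hQ.1).pow_const 2)) 1
          fun p => abs_le.2 ⟨by nlinarith [(stepFn_mem_Icc hQ hm hr p.1 p.2).1], hb p⟩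
    _ = 1 := by simp

/-- Variance inequality on a probability space. -/
lemma sq_integral_le {f : I × I → ℝ} (hmf : Measurable f) (C : ℝ)
    (hb : ∀ p, |f p| ≤ C) :
    (∫ p : I × I, f p) ^ 2 ≤ ∫ p : I × I, (f p) ^ 2 := by
  have hif : Integrable f := integrable_of_bounded hmf C hb
  have hif2 : Integrable (fun p => (f p) ^ 2) := by
    refine integrable_of_bounded (hmf.pow_const 2) (C^2) fun p => ?_
    rw [abs_pow]
    exact pow_le_pow_left₀ (abs_nonneg _) (hb p) 2
  set m := ∫ p : I × I, f p with hm
  have h0 : 0 ≤ ∫ p : I × I, (f p - m) ^ 2 := integral_nonneg fun p => sq_nonneg _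
  have hexp : ∫ p : I × I, (f p - m) ^ 2
      = (∫ p : I × I, (f p) ^ 2) - m ^ 2 := by
    have : (fun p : I × I => (f p - m) ^ 2)
        = fun p : I × I => (f p) ^ 2 - (2 * m) * f p + m ^ 2 := by
      funext p; ring
    rw [this]
    have h1 := integral_add (μ := (volume : Measure (I × I)))
      (f := fun p : I × I => (f p) ^ 2 - (2 * m) * f p) (g := fun _ => m ^ 2)
      (hif2.sub (hif.const_mul (2*m))) (integrable_const _)
    have h2 := integral_sub (μ := (volume : Measure (I × I))) hif2 (hif.const_mul (2*m))
    have h3 := integral_const_mul (μ := (volume : Measure (I × I))) (2*m) f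
    rw [h1, h2, h3, integral_const]
    simp [← hm]
    ring
  nlinarith [h0, hexp]

end WeakReg

namespace WeakReg

variable {ι : Type*} [Fintype ι] {W : I → I → ℝ} {Q : ι → Set I} {S T : Set I}

/-- The common refinement of `Q` with `{S, Sᶜ}` and `{T, Tᶜ}`. -/
def refine (Q : ι → Set I) (S T : Set I) : ι × Bool × Bool → Set I :=
  fun c => Q c.1 ∩ (if c.2.1 then S else Sᶜ) ∩ (if c.2.2 then T else Tᶜ)

lemma bool_if_disjoint {b b' : Bool} (h : b ≠ b') (S : Set I) :
    Disjoint (if b then S else Sᶜ) (if b' then S else Sᶜ) := by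
  cases b <;> cases b' <;> simp_all [disjoint_compl_left, disjoint_compl_right]

lemma isPartition_refine (hQ : IsPartition Q) (hS : MeasurableSet S)
    (hT : MeasurableSet T) : IsPartition (refine Q S T) := by
  refine ⟨fun c => ((hQ.1 c.1).inter ?_).inter ?_, ?_, ?_⟩
  · cases hb : c.2.1 <;> simp [hb, hS, hS.compl]
  · cases hb : c.2.2 <;> simp [hb, hT, hT.compl]
  · intro c c' hne
    unfold Function.onFun refine
    by_cases h1 : c.1 = c'.1
    · by_cases h2 : c.2.1 = c'.2.1
      · have h3 : c.2.2 ≠ c'.2.2 := by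
          intro h3; exact hne (Prod.ext h1 (Prod.ext h2 h3))
        exact (bool_if_disjoint h3 T).mono Set.inter_subset_right Set.inter_subset_right
      · exact (bool_if_disjoint h2 S).mono
          (Set.inter_subset_left.trans Set.inter_subset_right)
          (Set.inter_subset_left.trans Set.inter_subset_right)
    · exact (hQ.2.1 h1).mono
        (Set.inter_subset_left.trans Set.inter_subset_left)
        (Set.inter_subset_left.trans Set.inter_subset_left)
  · refine Set.eq_univ_iff_forall.mpr fun x => Set.mem_iUnion.mpr ?_
    obtain ⟨i, hi⟩ := exists_mem hQ x
    by_cases hxS : x ∈ S <;> by_cases hxT : x ∈ T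
    · exact ⟨(i, true, true), by simp [refine, hi, hxS, hxT]⟩
    · exact ⟨(i, true, false), by simp [refine, hi, hxS, hxT]⟩
    · exact ⟨(i, false, true), by simp [refine, hi, hxS, hxT]⟩
    · exact ⟨(i, false, false), by simp [refine, hi, hxS, hxT]⟩

lemma S_eq_biUnion (hQ : IsPartition Q) (S T : Set I) :
    S = ⋃ c ∈ Finset.univ.filter (fun c : ι × Bool × Bool => c.2.1 = true),
      refine Q S T c := by
  ext x
  simp only [Set.mem_iUnion, Finset.mem_filter, Finset.mem_univ, true_and]
  constructor
  · intro hx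
    obtain ⟨i, hi⟩ := exists_mem hQ x
    by_cases hxT : x ∈ T
    · exact ⟨(i, true, true), rfl, by simp [refine, hi, hx, hxT]⟩
    · exact ⟨(i, true, false), rfl, by simp [refine, hi, hx, hxT]⟩
  · rintro ⟨c, hc, hxc⟩
    have := hxc.1.2
    rw [hc] at this
    simpa using this

lemma T_eq_biUnion (hQ : IsPartition Q) (S T : Set I) :
    T = ⋃ c ∈ Finset.univ.filter (fun c : ι × Bool × Bool => c.2.2 = true),
      refine Q S T c := by
  ext x
  simp only [Set.mem_iUnion, Finset.mem_filter, Finset.mem_univ, true_and]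
  constructor
  · intro hx
    obtain ⟨i, hi⟩ := exists_mem hQ x
    by_cases hxS : x ∈ S
    · exact ⟨(i, true, true), rfl, by simp [refine, hi, hx, hxS]⟩
    · exact ⟨(i, false, true), rfl, by simp [refine, hi, hx, hxS]⟩
  · rintro ⟨c, hc, hxc⟩
    have := hxc.2
    rw [hc] at this
    simpa using this

lemma Q_eq_biUnion [DecidableEq ι] (hQ : IsPartition Q) (S T : Set I) (i : ι) :
    Q i = ⋃ c ∈ Finset.univ.filter (fun c : ι × Bool × Bool => c.1 = i),
      refine Q S T c := by
  ext x
  simp only [Set.mem_iUnion, Finset.mem_filter, Finset.mem_univ, true_and]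
  constructor
  · intro hx
    by_cases hxS : x ∈ S <;> by_cases hxT : x ∈ T
    · exact ⟨(i, true, true), rfl, by simp [refine, hx, hxS, hxT]⟩
    · exact ⟨(i, true, false), rfl, by simp [refine, hx, hxS, hxT]⟩
    · exact ⟨(i, false, true), rfl, by simp [refine, hx, hxS, hxT]⟩
    · exact ⟨(i, false, false), rfl, by simp [refine, hx, hxS, hxT]⟩
  · rintro ⟨c, hc, hxc⟩
    have := hxc.1.1
    rwa [hc] at this

end WeakReg

namespace WeakReg

variable {ι : Type*} [Fintype ι] {W : I → I → ℝ} {Q : ι → Set I} {S T : Set I}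

lemma setIntegral_sub_refine_ST (hQ : IsPartition Q)
    (hm : Measurable fun p : I × I => W p.1 p.2)
    (hr : ∀ x y, W x y ∈ Set.Icc (0:ℝ) 1)
    (hS : MeasurableSet S) (hT : MeasurableSet T) :
    ∫ p : I × I in S ×ˢ T, (W p.1 p.2 - stepFn W (refine Q S T) p.1 p.2) = 0 := by
  have h1 := integral_sub_stepFn_biUnion (isPartition_refine hQ hS hT) hm hr
    (Finset.univ.filter (fun c : ι × Bool × Bool => c.2.1 = true))
    (Finset.univ.filter (fun c : ι × Bool × Bool => c.2.2 = true))
  rw [← S_eq_biUnion hQ S T, ← T_eq_biUnion hQ S T] at h1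
  exact h1

lemma setIntegral_sub_refine_cell [DecidableEq ι] (hQ : IsPartition Q)
    (hm : Measurable fun p : I × I => W p.1 p.2)
    (hr : ∀ x y, W x y ∈ Set.Icc (0:ℝ) 1)
    (hS : MeasurableSet S) (hT : MeasurableSet T) (i j : ι) :
    ∫ p : I × I in Q i ×ˢ Q j, (W p.1 p.2 - stepFn W (refine Q S T) p.1 p.2) = 0 := by
  have h1 := integral_sub_stepFn_biUnion (isPartition_refine hQ hS hT) hm hr
    (Finset.univ.filter (fun c : ι × Bool × Bool => c.1 = i))
    (Finset.univ.filter (fun c : ι × Bool × Bool => c.1 = j))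
  rw [← Q_eq_biUnion hQ S T i, ← Q_eq_biUnion hQ S T j] at h1
  exact h1

lemma setIntegral_diff_cell [DecidableEq ι] (hQ : IsPartition Q)
    (hm : Measurable fun p : I × I => W p.1 p.2)
    (hr : ∀ x y, W x y ∈ Set.Icc (0:ℝ) 1)
    (hS : MeasurableSet S) (hT : MeasurableSet T) (i j : ι) :
    ∫ p : I × I in Q i ×ˢ Q j,
      (stepFn W (refine Q S T) p.1 p.2 - stepFn W Q p.1 p.2) = 0 := by
  have hiW : Integrable (fun p : I × I => W p.1 p.2) := integrable_W hm hr
  have hif : Integrable (fun p : I × I => stepFn W Q p.1 p.2) := integrable_stepFn hQ.1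
  have hig : Integrable (fun p : I × I => stepFn W (refine Q S T) p.1 p.2) :=
    integrable_stepFn (isPartition_refine hQ hS hT).1
  have key : (fun p : I × I => stepFn W (refine Q S T) p.1 p.2 - stepFn W Q p.1 p.2)
      = fun p : I × I => (W p.1 p.2 - stepFn W Q p.1 p.2)
          - (W p.1 p.2 - stepFn W (refine Q S T) p.1 p.2) := by
    funext p; ring
  rw [key]
  have e1 := integral_sub (μ := (volume : Measure (I × I)).restrict (Q i ×ˢ Q j))
    (f := fun p : I × I => W p.1 p.2 - stepFn W Q p.1 p.2)
    (g := fun p : I × I => W p.1 p.2 - stepFn W (refine Q S T) p.1 p.2)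
    ((hiW.sub hif).integrableOn) ((hiW.sub hig).integrableOn)
  rw [e1, setIntegral_sub_refine_cell hQ hm hr hS hT i j, sub_zero]
  have e2 := integral_sub (μ := (volume : Measure (I × I)).restrict (Q i ×ˢ Q j))
    (f := fun p : I × I => W p.1 p.2)
    (g := fun p : I × I => stepFn W Q p.1 p.2)
    hiW.integrableOn hif.integrableOn
  rw [e2, setIntegral_stepFn_cell hQ, sub_self]

/-- Orthogonality: the coarse step function is orthogonal to the increment. -/
lemma integral_stepFn_mul_diff [DecidableEq ι] (hQ : IsPartition Q)
    (hm : Measurable fun p : I × I => W p.1 p.2)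
    (hr : ∀ x y, W x y ∈ Set.Icc (0:ℝ) 1)
    (hS : MeasurableSet S) (hT : MeasurableSet T) :
    ∫ p : I × I, stepFn W Q p.1 p.2
        * (stepFn W (refine Q S T) p.1 p.2 - stepFn W Q p.1 p.2) = 0 := by
  set D : I × I → ℝ :=
    fun p => stepFn W (refine Q S T) p.1 p.2 - stepFn W Q p.1 p.2 with hD
  have hiD : Integrable D :=
    (integrable_stepFn (isPartition_refine hQ hS hT).1).sub (integrable_stepFn hQ.1)
  have hexp : (fun p : I × I => stepFn W Q p.1 p.2 * D p)
      = fun p : I × I => ∑ i : ι, ∑ j : ι,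
          Set.indicator (Q i ×ˢ Q j) (fun q => cellAvg W Q i j * D q) p := by
    funext p
    rw [show stepFn W Q p.1 p.2 * D p
        = (∑ i : ι, ∑ j : ι,
            Set.indicator (Q i ×ˢ Q j) (fun _ => cellAvg W Q i j) p) * D p from rfl,
      Finset.sum_mul]
    refine Finset.sum_congr rfl fun i _ => ?_
    rw [Finset.sum_mul]
    refine Finset.sum_congr rfl fun j _ => ?_
    by_cases hp : p ∈ Q i ×ˢ Q j <;> simp [hp]
  rw [hexp, integral_finset_sum _ fun i _ => integrable_finset_sum _ fun j _ =>
    (hiD.const_mul _).indicator ((hQ.1 i).prod (hQ.1 j))]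
  refine Finset.sum_eq_zero fun i _ => ?_
  rw [integral_finset_sum _ fun j _ => (hiD.const_mul _).indicator ((hQ.1 i).prod (hQ.1 j))]
  refine Finset.sum_eq_zero fun j _ => ?_
  rw [integral_indicator ((hQ.1 i).prod (hQ.1 j)), integral_const_mul,
    setIntegral_diff_cell hQ hm hr hS hT i j, mul_zero]

end WeakReg

namespace WeakReg

variable {ι : Type*} [Fintype ι] {W : I → I → ℝ} {Q : ι → Set I} {S T : Set I}

lemma energy_refine_ge [DecidableEq ι] (hQ : IsPartition Q)
    (hm : Measurable fun p : I × I => W p.1 p.2)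
    (hr : ∀ x y, W x y ∈ Set.Icc (0:ℝ) 1)
    (hS : MeasurableSet S) (hT : MeasurableSet T) {ε : ℝ} (hε : 0 ≤ ε)
    (h : ε < |∫ p : I × I in S ×ˢ T, (W p.1 p.2 - stepFn W Q p.1 p.2)|) :
    energy W Q + ε ^ 2 ≤ energy W (refine Q S T) := by
  have hQ' := isPartition_refine hQ hS hT
  set f : I × I → ℝ := fun p => stepFn W Q p.1 p.2 with hf
  set g : I × I → ℝ := fun p => stepFn W (refine Q S T) p.1 p.2 with hg
  set D : I × I → ℝ := fun p => g p - f p with hDdef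
  have hmf : Measurable f := measurable_stepFn hQ.1
  have hmg : Measurable g := measurable_stepFn hQ'.1
  have hmD : Measurable D := hmg.sub hmf
  have hfb : ∀ p : I × I, f p ∈ Set.Icc (0:ℝ) 1 := fun p => stepFn_mem_Icc hQ hm hr p.1 p.2
  have hgb : ∀ p : I × I, g p ∈ Set.Icc (0:ℝ) 1 := fun p => stepFn_mem_Icc hQ' hm hr p.1 p.2
  have hDb : ∀ p : I × I, |D p| ≤ 1 := fun p => by
    have h1 := hfb p; have h2 := hgb p
    simp only [hDdef]
    rw [abs_le]
    constructor
    · linarith [h1.2, h2.1]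
    · linarith [h1.1, h2.2]
  -- the increment integrates to > ε on S ×ˢ T
  have hST : MeasurableSet (S ×ˢ T) := hS.prod hT
  have hiW : Integrable (fun p : I × I => W p.1 p.2) := integrable_W hm hr
  have hif : Integrable f := integrable_stepFn hQ.1
  have hig : Integrable g := integrable_stepFn hQ'.1
  have hiD : Integrable D := hig.sub hif
  have hDst : ε < |∫ p : I × I in S ×ˢ T, D p| := by
    have key : (fun p : I × I => D p)
        = fun p : I × I => (W p.1 p.2 - f p) - (W p.1 p.2 - g p) := by
      funext p; simp only [hDdef]; ring
    have e1 := integral_sub (μ := (volume : Measure (I × I)).restrict (S ×ˢ T))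
      (f := fun p : I × I => W p.1 p.2 - f p)
      (g := fun p : I × I => W p.1 p.2 - g p)
      ((hiW.sub hif).integrableOn) ((hiW.sub hig).integrableOn)
    calc ε < |∫ p : I × I in S ×ˢ T, (W p.1 p.2 - f p)| := h
      _ = |∫ p : I × I in S ×ˢ T, D p| := by
          rw [key, e1, setIntegral_sub_refine_ST hQ hm hr hS hT, sub_zero]
  -- Cauchy–Schwarz through the indicator
  have hCS : ε ^ 2 ≤ ∫ p : I × I, (D p) ^ 2 := by
    set h' : I × I → ℝ := (S ×ˢ T).indicator D with hh'
    have hmh : Measurable h' := hmD.indicator hST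
    have hhb : ∀ p, |h' p| ≤ 1 := fun p => by
      by_cases hp : p ∈ S ×ˢ T <;> simp [hh', hp, hDb p]
    have h1 : ∫ p : I × I in S ×ˢ T, D p = ∫ p : I × I, h' p :=
      (integral_indicator hST).symm
    have h2 : (∫ p : I × I, h' p) ^ 2 ≤ ∫ p : I × I, (h' p) ^ 2 :=
      sq_integral_le hmh 1 hhb
    have h3 : ∫ p : I × I, (h' p) ^ 2 ≤ ∫ p : I × I, (D p) ^ 2 := by
      refine integral_mono
        (integrable_of_bounded (hmh.pow_const 2) 1 fun p => by
          rw [abs_pow]; exact pow_le_one₀ (abs_nonneg _) (hhb p) |>.trans le_rfl)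
        (integrable_of_bounded (hmD.pow_const 2) 1 fun p => by
          rw [abs_pow]; exact pow_le_one₀ (abs_nonneg _) (hDb p)) fun p => by
        by_cases hp : p ∈ S ×ˢ T <;> simp [hh', hp, sq_nonneg (D p)]
    have h4 : ε ^ 2 ≤ (∫ p : I × I, h' p) ^ 2 := by
      rw [← h1]
      calc ε ^ 2 ≤ |∫ p : I × I in S ×ˢ T, D p| ^ 2 :=
            pow_le_pow_left₀ hε hDst.le 2
        _ = (∫ p : I × I in S ×ˢ T, D p) ^ 2 := sq_abs _
    linarith
  -- Pythagoras
  have horth := integral_stepFn_mul_diff hQ hm hr hS hT (ι := ι)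
  have hiD2 : Integrable (fun p => (D p) ^ 2) :=
    integrable_of_bounded (hmD.pow_const 2) 1 fun p => by
      rw [abs_pow]; exact pow_le_one₀ (abs_nonneg _) (hDb p)
  have hif2 : Integrable (fun p => (f p) ^ 2) :=
    integrable_of_bounded (hmf.pow_const 2) 1 fun p => by
      rw [abs_pow]
      exact pow_le_one₀ (abs_nonneg _) (abs_le.2 ⟨by linarith [(hfb p).1], (hfb p).2⟩)
  have hifD : Integrable (fun p => f p * D p) :=
    integrable_of_bounded (hmf.mul hmD) 1 fun p => by
      rw [abs_mul]
      calc |f p| * |D p| ≤ 1 * 1 := by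
            refine mul_le_mul ?_ (hDb p) (abs_nonneg _) zero_le_one
            exact abs_le.2 ⟨by linarith [(hfb p).1], (hfb p).2⟩
        _ = 1 := mul_one 1
  have hpyth : energy W (refine Q S T)
      = energy W Q + (∫ p : I × I, (D p) ^ 2)
          + 2 * ∫ p : I × I, f p * D p := by
    have hgexp : (fun p : I × I => (g p) ^ 2)
        = fun p : I × I => (f p) ^ 2 + (D p) ^ 2 + 2 * (f p * D p) := by
      funext p; simp only [hDdef]; ring
    have e1 := integral_add (μ := (volume : Measure (I × I)))
      (f := fun p : I × I => (f p) ^ 2 + (D p) ^ 2)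
      (g := fun p : I × I => 2 * (f p * D p))
      (hif2.add hiD2) (hifD.const_mul 2)
    have e2 := integral_add (μ := (volume : Measure (I × I)))
      (f := fun p : I × I => (f p) ^ 2) (g := fun p : I × I => (D p) ^ 2) hif2 hiD2
    calc energy W (refine Q S T) = ∫ p : I × I, (g p) ^ 2 := rfl
      _ = ∫ p : I × I, ((f p) ^ 2 + (D p) ^ 2 + 2 * (f p * D p)) := by rw [hgexp]
      _ = _ := by rw [e1, e2, integral_const_mul]; rfl
  rw [hpyth, horth]
  simp only [mul_zero, add_zero]
  linarith [hCS]

end WeakReg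

namespace WeakReg

variable {ι κ : Type*} [Fintype ι] [Fintype κ] {W : I → I → ℝ} {Q : ι → Set I}

lemma stepFn_reindex (e : κ ≃ ι) (x y : I) :
    stepFn W (Q ∘ e) x y = stepFn W Q x y := by
  set G : ι → ι → ℝ :=
    fun i j => Set.indicator (Q i ×ˢ Q j) (fun _ => cellAvg W Q i j) (x, y) with hG
  calc stepFn W (Q ∘ e) x y = ∑ i : κ, ∑ j : κ, G (e i) (e j) := rfl
    _ = ∑ i : κ, ∑ j : ι, G (e i) j :=
        Finset.sum_congr rfl fun i _ => Equiv.sum_comp e (G (e i))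
    _ = ∑ i : ι, ∑ j : ι, G i j := Equiv.sum_comp e (fun i => ∑ j : ι, G i j)
    _ = stepFn W Q x y := rfl

lemma isPartition_comp (hQ : IsPartition Q) (e : κ ≃ ι) : IsPartition (Q ∘ e) :=
  ⟨fun i => hQ.1 _, fun _ _ h => hQ.2.1 (e.injective.ne h), by
    have : ⋃ i, (Q ∘ e) i = ⋃ i, Q (e i) := rfl
    rw [this, e.surjective.iUnion_comp Q]; exact hQ.2.2⟩

lemma energy_comp (e : κ ≃ ι) : energy W (Q ∘ e) = energy W Q := by
  unfold energy
  congr 1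
  funext p
  rw [stepFn_reindex e]

lemma cutNorm_nonempty_zero (U : I → I → ℝ) :
    (0:ℝ) ∈ {r : ℝ | ∃ S T : Set I, MeasurableSet S ∧ MeasurableSet T ∧
      r = |∫ p : I × I in S ×ˢ T, U p.1 p.2|} := by
  refine ⟨∅, ∅, MeasurableSet.empty, MeasurableSet.empty, ?_⟩
  rw [Set.empty_prod]
  simp

end WeakReg

/-- Weak regularity lemma, Frieze–Kannan: for every `ε > 0` and every
symmetric measurable `W : [0,1]² → [0,1]` there is a measurable partition `Q` of `[0,1]`
into at most `2^(2/ε²)` parts with `‖W − W_Q‖_□ ≤ ε`. -/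
theorem weak_regularity_lemma
    (ε : ℝ) (hε : 0 < ε)
    (W : I → I → ℝ) (hWmeas : Measurable fun p : I × I => W p.1 p.2)
    (hWsymm : ∀ x y, W x y = W y x) (hWrange : ∀ x y, W x y ∈ Set.Icc (0:ℝ) 1) :
    ∃ (q : ℕ) (Q : Fin q → Set I), (q : ℝ) ≤ 2 ^ (2 / ε ^ 2 : ℝ) ∧ IsPartition Q ∧
      cutNormSets (fun x y => W x y - stepFn W Q x y) ≤ ε := by

  classical
  have hε2 : (0:ℝ) < ε ^ 2 := by positivity
  have main : ∀ k : ℕ, ∃ (q : ℕ) (Q : Fin q → Set I), IsPartition Q ∧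
      ((cutNormSets (fun x y => W x y - stepFn W Q x y) ≤ ε ∧
          (q:ℝ) ≤ 2 ^ (2 / ε ^ 2 : ℝ))
        ∨ (q ≤ 4 ^ k ∧ (k:ℝ) * ε ^ 2 ≤ WeakReg.energy W Q)) := by
    intro k
    induction k with
    | zero =>
      refine ⟨1, fun _ => Set.univ,
        ⟨fun _ => MeasurableSet.univ, Subsingleton.pairwise, Set.iUnion_const _⟩,
        Or.inr ⟨by norm_num, ?_⟩⟩
      simpa using WeakReg.energy_nonneg (W := W) (Q := fun _ : Fin 1 => Set.univ)
    | succ k ih =>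
      obtain ⟨q, Q, hQ, hbranch⟩ := ih
      rcases hbranch with hsucc | ⟨hq, hE⟩
      · exact ⟨q, Q, hQ, Or.inl hsucc⟩
      by_cases hcut : cutNormSets (fun x y => W x y - stepFn W Q x y) ≤ ε
      · refine ⟨q, Q, hQ, Or.inl ⟨hcut, ?_⟩⟩
        have hE1 : WeakReg.energy W Q ≤ 1 := WeakReg.energy_le_one hQ hWmeas hWrange
        have hk : (k:ℝ) * ε ^ 2 ≤ 1 := le_trans hE hE1
        have h2k : ((2 * k : ℕ) : ℝ) ≤ 2 / ε ^ 2 := by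
          push_cast
          rw [le_div_iff₀ hε2]
          nlinarith
        calc (q:ℝ) ≤ ((4 ^ k : ℕ) : ℝ) := by exact_mod_cast hq
          _ = (2:ℝ) ^ (2 * k : ℕ) := by push_cast; rw [pow_mul]; norm_num
          _ = (2:ℝ) ^ (((2 * k : ℕ) : ℝ)) := (Real.rpow_natCast 2 (2*k)).symm
          _ ≤ 2 ^ (2 / ε ^ 2 : ℝ) := Real.rpow_le_rpow_of_exponent_le one_le_two h2k
      · have hne : Set.Nonempty {r : ℝ | ∃ S T : Set I, MeasurableSet S ∧
            MeasurableSet T ∧ r = |∫ p : I × I in S ×ˢ T,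
              ((fun x y => W x y - stepFn W Q x y) p.1 p.2)|} :=
          ⟨0, WeakReg.cutNorm_nonempty_zero (fun x y => W x y - stepFn W Q x y)⟩
        obtain ⟨r, hrmem, hεr⟩ := exists_lt_of_lt_csSup hne (not_le.mp hcut)
        obtain ⟨S, T, hS, hT, rfl⟩ := hrmem
        have hstep := WeakReg.energy_refine_ge hQ hWmeas hWrange hS hT hε.le hεr
        have hcard : Fintype.card (Fin q × Bool × Bool) = 4 * q := by
          simp only [Fintype.card_prod, Fintype.card_bool, Fintype.card_fin]
          ring
        let e := Fintype.equivFinOfCardEq hcard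
        refine ⟨4 * q, WeakReg.refine Q S T ∘ e.symm,
          WeakReg.isPartition_comp (WeakReg.isPartition_refine hQ hS hT) e.symm,
          Or.inr ⟨?_, ?_⟩⟩
        · rw [pow_succ, Nat.mul_comm 4 q]
          exact Nat.mul_le_mul_right 4 hq
        · rw [WeakReg.energy_comp e.symm]
          push_cast
          nlinarith [hstep, hE]
  obtain ⟨q, Q, hQ, hbr⟩ := main (⌊1 / ε^2⌋₊ + 1)
  rcases hbr with ⟨h1, h2⟩ | ⟨hq, hE⟩
  · exact ⟨q, Q, h2, hQ, h1⟩
  · exfalso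
    have hE1 : WeakReg.energy W Q ≤ 1 := WeakReg.energy_le_one hQ hWmeas hWrange
    have hfl : 1 / ε^2 < ((⌊1 / ε^2⌋₊ : ℝ) + 1) := Nat.lt_floor_add_one _
    rw [div_lt_iff₀ hε2] at hfl
    have h1' : (1:ℝ) < ((⌊1 / ε^2⌋₊ + 1 : ℕ) : ℝ) * ε^2 := by
      push_cast
      nlinarith
    have := le_trans hE hE1
    linarith

end
end

section
/- Energy increment step: Let W : [0,1]² → [0,1] be symmetric measurable, R a finite measurable partition of [0,1], and suppose ‖W − W_R‖_□ > ε. Then there is a refinement R' of R, obtained by refining each part of R into at most 4 subparts, such that ‖W_{R'}‖₂² ≥ ‖W_R‖₂² + ε². -/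
open MeasureTheory Finset
open scoped unitInterval

noncomputable section

namespace EnergyAux

variable {ι : Type*} [Fintype ι]

lemma integrable_of_bdd {h : I × I → ℝ} (hm : AEStronglyMeasurable h volume) (C : ℝ)
    (hb : ∀ p, |h p| ≤ C) : Integrable h volume :=
  ⟨hm, HasFiniteIntegral.of_bounded (C := C)
    (Filter.Eventually.of_forall fun p => by simpa using hb p)⟩

lemma measurable_stepFn (W : I → I → ℝ) (Q : ι → Set I) (hQm : ∀ i, MeasurableSet (Q i)) :
    Measurable fun p : I × I => stepFn W Q p.1 p.2 := by
  have h : (fun p : I × I => stepFn W Q p.1 p.2)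
      = fun p : I × I => ∑ i : ι, ∑ j : ι,
          Set.indicator (Q i ×ˢ Q j) (fun _ => cellAvg W Q i j) p := by
    funext p; simp [stepFn]
  rw [h]
  exact Finset.measurable_sum _ fun i _ => Finset.measurable_sum _ fun j _ =>
    measurable_const.indicator ((hQm i).prod (hQm j))

lemma stepFn_eq_cellAvg {W : I → I → ℝ} {Q : ι → Set I}
    (hd : Pairwise (Function.onFun Disjoint Q)) {i j : ι} {x y : I}
    (hx : x ∈ Q i) (hy : y ∈ Q j) : stepFn W Q x y = cellAvg W Q i j := by
  unfold stepFn
  rw [Finset.sum_eq_single i]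
  · rw [Finset.sum_eq_single j]
    · exact Set.indicator_of_mem (Set.mk_mem_prod hx hy) _
    · intro b _ hb
      exact Set.indicator_of_notMem
        (fun hmem => Set.disjoint_left.mp (hd hb) hmem.2 hy) _
    · intro hj; exact absurd (Finset.mem_univ j) hj
  · intro b _ hb
    apply Finset.sum_eq_zero
    intro c _
    exact Set.indicator_of_notMem
      (fun hmem => Set.disjoint_left.mp (hd hb) hmem.1 hx) _
  · intro hi; exact absurd (Finset.mem_univ i) hi

lemma integrable_W {W : I → I → ℝ} (hWmeas : Measurable fun p : I × I => W p.1 p.2)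
    (hWrange : ∀ x y, W x y ∈ Set.Icc (0:ℝ) 1) :
    Integrable (fun p : I × I => W p.1 p.2) volume :=
  integrable_of_bdd hWmeas.aestronglyMeasurable 1 fun p =>
    abs_le.mpr ⟨by linarith [(hWrange p.1 p.2).1], (hWrange p.1 p.2).2⟩

omit [Fintype ι] in
lemma cellAvg_mem_Icc {W : I → I → ℝ} (hWmeas : Measurable fun p : I × I => W p.1 p.2)
    (hWrange : ∀ x y, W x y ∈ Set.Icc (0:ℝ) 1) {Q : ι → Set I}
    (hQm : ∀ i, MeasurableSet (Q i)) (i j : ι) : cellAvg W Q i j ∈ Set.Icc (0:ℝ) 1 := by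
  unfold cellAvg
  split_ifs with h
  · exact ⟨le_rfl, zero_le_one⟩
  · have hcell : MeasurableSet (Q i ×ˢ Q j) := (hQm i).prod (hQm j)
    have hvol : (0:ℝ) < (volume (Q i ×ˢ Q j)).toReal :=
      ENNReal.toReal_pos h (measure_ne_top _ _)
    constructor
    · exact div_nonneg (setIntegral_nonneg hcell fun p _ => (hWrange p.1 p.2).1) hvol.le
    · rw [div_le_one hvol]
      calc ∫ p : I × I in Q i ×ˢ Q j, W p.1 p.2
          ≤ ∫ _p : I × I in Q i ×ˢ Q j, (1:ℝ) := by
            apply setIntegral_mono_on ((integrable_W hWmeas hWrange).integrableOn)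
              (integrableOn_const (measure_lt_top _ _).ne) hcell
            exact fun p _ => (hWrange p.1 p.2).2
        _ = (volume (Q i ×ˢ Q j)).toReal := by simp [Measure.real]

lemma stepFn_mem_Icc {W : I → I → ℝ} (hWmeas : Measurable fun p : I × I => W p.1 p.2)
    (hWrange : ∀ x y, W x y ∈ Set.Icc (0:ℝ) 1) {Q : ι → Set I}
    (hQ : IsPartition Q) (x y : I) : stepFn W Q x y ∈ Set.Icc (0:ℝ) 1 := by
  have hx : x ∈ ⋃ i, Q i := hQ.2.2 ▸ Set.mem_univ x
  have hy : y ∈ ⋃ i, Q i := hQ.2.2 ▸ Set.mem_univ y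
  obtain ⟨i, hi⟩ := Set.mem_iUnion.mp hx
  obtain ⟨j, hj⟩ := Set.mem_iUnion.mp hy
  rw [stepFn_eq_cellAvg hQ.2.1 hi hj]
  exact cellAvg_mem_Icc hWmeas hWrange hQ.1 i j

lemma integrable_stepFn {W : I → I → ℝ} (hWmeas : Measurable fun p : I × I => W p.1 p.2)
    (hWrange : ∀ x y, W x y ∈ Set.Icc (0:ℝ) 1) {Q : ι → Set I} (hQ : IsPartition Q) :
    Integrable (fun p : I × I => stepFn W Q p.1 p.2) volume :=
  integrable_of_bdd (measurable_stepFn W Q hQ.1).aestronglyMeasurable 1 fun p =>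
    abs_le.mpr ⟨by linarith [(stepFn_mem_Icc hWmeas hWrange hQ p.1 p.2).1],
      (stepFn_mem_Icc hWmeas hWrange hQ p.1 p.2).2⟩

lemma setIntegral_stepFn_cell {W : I → I → ℝ} {Q : ι → Set I}
    (hQm : ∀ i, MeasurableSet (Q i)) (hd : Pairwise (Function.onFun Disjoint Q)) (i j : ι) :
    ∫ p : I × I in Q i ×ˢ Q j, stepFn W Q p.1 p.2
      = ∫ p : I × I in Q i ×ˢ Q j, W p.1 p.2 := by
  have hcell : MeasurableSet (Q i ×ˢ Q j) := (hQm i).prod (hQm j)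
  have h1 : ∫ p : I × I in Q i ×ˢ Q j, stepFn W Q p.1 p.2
      = ∫ _p : I × I in Q i ×ˢ Q j, cellAvg W Q i j :=
    setIntegral_congr_fun hcell fun p hp => stepFn_eq_cellAvg hd hp.1 hp.2
  rw [h1, setIntegral_const]
  by_cases h : volume (Q i ×ˢ Q j) = 0
  · rw [cellAvg, if_pos h, smul_zero]
    rw [show (∫ p : I × I in Q i ×ˢ Q j, W p.1 p.2) = 0 from by
      rw [Measure.restrict_eq_zero.mpr h, integral_zero_measure]]
  · rw [cellAvg, if_neg h, smul_eq_mul]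
    have hvol : (volume (Q i ×ˢ Q j)).toReal ≠ 0 :=
      (ENNReal.toReal_pos h (measure_ne_top _ _)).ne'
    field_simp
    rw [mul_comm]; rfl

lemma integral_eq_sum_cells {Q : ι → Set I} (hQ : IsPartition Q) {h : I × I → ℝ}
    (hint : Integrable h volume) :
    ∫ p : I × I, h p = ∑ ij : ι × ι, ∫ p : I × I in Q ij.1 ×ˢ Q ij.2, h p := by
  have hu : (⋃ ij : ι × ι, Q ij.1 ×ˢ Q ij.2) = Set.univ := by
    rw [Set.iUnion_prod Q Q, hQ.2.2, Set.univ_prod_univ]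
  have hd : Pairwise (Function.onFun Disjoint fun ij : ι × ι => Q ij.1 ×ˢ Q ij.2) := by
    rintro ⟨i, j⟩ ⟨i', j'⟩ hne
    have : i ≠ i' ∨ j ≠ j' := by
      by_contra hc; push_neg at hc; exact hne (by rw [hc.1, hc.2])
    rcases this with hii | hjj
    · exact Set.disjoint_prod.mpr (Or.inl (hQ.2.1 hii))
    · exact Set.disjoint_prod.mpr (Or.inr (hQ.2.1 hjj))
  calc ∫ p : I × I, h p = ∫ p : I × I in ⋃ ij : ι × ι, Q ij.1 ×ˢ Q ij.2, h p := by
        rw [hu, Measure.restrict_univ]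
    _ = ∑ ij : ι × ι, ∫ p : I × I in Q ij.1 ×ˢ Q ij.2, h p :=
        integral_iUnion_fintype (fun ij => (hQ.1 ij.1).prod (hQ.1 ij.2)) hd
          fun ij => hint.integrableOn

end EnergyAux

lemma abs_setIntegral_le_sqrt {g : I × I → ℝ} (hgm : Measurable g) (C : ℝ)
    (hgb : ∀ p, |g p| ≤ C) (A : Set (I × I)) :
    |∫ p in A, g p| ≤ Real.sqrt (∫ p : I × I, (g p) ^ 2) := by
  set μ' := (volume : Measure (I × I)).restrict A with hμ'
  have hμ'le : μ' Set.univ ≤ 1 := by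
    calc μ' Set.univ ≤ volume (Set.univ : Set (I × I)) :=
          le_trans (Measure.restrict_le_self _) le_rfl
      _ = 1 := measure_univ
  have hint : Integrable g μ' := by
    refine Integrable.restrict ?_
    exact ⟨hgm.aestronglyMeasurable, HasFiniteIntegral.of_bounded (C := C)
      (Filter.Eventually.of_forall fun p => by simpa using hgb p)⟩
  have hmem : MemLp (fun p => |g p|) (ENNReal.ofReal 2) μ' :=
    MemLp.of_bound (hgm.abs.aestronglyMeasurable.restrict) C
      (Filter.Eventually.of_forall fun p => by simpa [abs_abs] using hgb p)
  have hmem1 : MemLp (fun _ : I × I => (1:ℝ)) (ENNReal.ofReal 2) μ' :=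
    MemLp.of_bound aestronglyMeasurable_const 1
      (Filter.Eventually.of_forall fun p => by norm_num)
  have hpq : Real.HolderConjugate 2 2 := Real.HolderConjugate.two_two
  have holder := integral_mul_le_Lp_mul_Lq_of_nonneg hpq
    (Filter.Eventually.of_forall fun p => abs_nonneg (g p))
    (Filter.Eventually.of_forall fun _ => zero_le_one) hmem hmem1
  -- holder : ∫ |g| * 1 ∂μ' ≤ (∫ |g|^2 ∂μ')^(1/2) * (∫ 1^2 ∂μ')^(1/2)
  have h1 : ∫ p, |g p| * 1 ∂μ' = ∫ p, |g p| ∂μ' := by simp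
  have h2 : ∫ p, (1:ℝ) ^ (2:ℝ) ∂μ' = (μ' Set.univ).toReal := by
    simp [Real.one_rpow, Measure.real]
  have h2le : (∫ p, (1:ℝ) ^ (2:ℝ) ∂μ') ^ ((1:ℝ)/2) ≤ 1 := by
    rw [h2]
    apply Real.rpow_le_one ENNReal.toReal_nonneg _ (by norm_num)
    calc (μ' Set.univ).toReal ≤ (1 : ENNReal).toReal :=
          ENNReal.toReal_mono (by norm_num) hμ'le
      _ = 1 := by simp
  have h3 : ∫ p, |g p| ^ (2:ℝ) ∂μ' = ∫ p, (g p) ^ 2 ∂μ' := by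
    apply integral_congr_ae
    filter_upwards with p
    rw [show ((2:ℝ) = ((2:ℕ):ℝ)) from by norm_num, Real.rpow_natCast, sq_abs]
  have hsqint : Integrable (fun p => (g p) ^ 2) volume := by
    refine ⟨(hgm.pow_const 2).aestronglyMeasurable,
      HasFiniteIntegral.of_bounded (C := C ^ 2) (Filter.Eventually.of_forall fun p => ?_)⟩
    have : |g p| ^ 2 ≤ C ^ 2 := by
      have h0 := abs_nonneg (g p)
      nlinarith [hgb p]
    simpa [abs_pow, sq_abs] using this
  have h4 : ∫ p, (g p) ^ 2 ∂μ' ≤ ∫ p : I × I, (g p) ^ 2 :=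
    setIntegral_le_integral hsqint
      (Filter.Eventually.of_forall fun p => sq_nonneg (g p))
  have h5 : |∫ p in A, g p| ≤ ∫ p, |g p| ∂μ' := by
    simpa [Real.norm_eq_abs] using norm_integral_le_integral_norm (μ := μ') g
  have hnn : 0 ≤ ∫ p : I × I, (g p) ^ 2 :=
    integral_nonneg fun p => sq_nonneg (g p)
  have hnn' : 0 ≤ ∫ p, (g p) ^ 2 ∂μ' :=
    integral_nonneg fun p => sq_nonneg (g p)
  calc |∫ p in A, g p| ≤ ∫ p, |g p| ∂μ' := h5
    _ = ∫ p, |g p| * 1 ∂μ' := by simp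
    _ ≤ (∫ p, |g p| ^ (2:ℝ) ∂μ') ^ ((1:ℝ)/2) * (∫ p, (1:ℝ) ^ (2:ℝ) ∂μ') ^ ((1:ℝ)/2) := holder
    _ ≤ (∫ p, |g p| ^ (2:ℝ) ∂μ') ^ ((1:ℝ)/2) * 1 := by
        apply mul_le_mul_of_nonneg_left h2le
        apply Real.rpow_nonneg
        rw [h3]; exact hnn'
    _ = (∫ p, (g p) ^ 2 ∂μ') ^ ((1:ℝ)/2) := by rw [h3, mul_one]
    _ ≤ (∫ p : I × I, (g p) ^ 2) ^ ((1:ℝ)/2) :=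
        Real.rpow_le_rpow hnn' h4 (by norm_num)
    _ = Real.sqrt (∫ p : I × I, (g p) ^ 2) := by
        rw [Real.sqrt_eq_rpow]

set_option maxHeartbeats 1000000 in
/-- Energy increment: if `‖W − W_R‖_□ > ε` then there is a refinement
`R'` of `R`, refining each part of `R` into at most `4` subparts, with
`‖W_{R'}‖₂² ≥ ‖W_R‖₂² + ε²`. -/
theorem energy_increment {q : ℕ} (ε : ℝ) (hε : 0 < ε)
    (W : I → I → ℝ) (hWmeas : Measurable fun p : I × I => W p.1 p.2)
    (hWsymm : ∀ x y, W x y = W y x) (hWrange : ∀ x y, W x y ∈ Set.Icc (0:ℝ) 1)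
    (R : Fin q → Set I) (hR : IsPartition R)
    (hdev : cutNormSets (fun x y => W x y - stepFn W R x y) > ε) :
    ∃ R' : Fin q × Fin 4 → Set I, IsPartition R' ∧ (∀ p, R' p ⊆ R p.1) ∧
      (∫ p : I × I, (stepFn W R' p.1 p.2) ^ 2)
        ≥ (∫ p : I × I, (stepFn W R p.1 p.2) ^ 2) + ε ^ 2 := by
  classical
  obtain ⟨hRm, hRd, hRu⟩ := hR
  obtain ⟨S, T, hS, hT, hST⟩ : ∃ S T : Set I, MeasurableSet S ∧ MeasurableSet T ∧
      ε < |∫ p : I × I in S ×ˢ T, (W p.1 p.2 - stepFn W R p.1 p.2)| := by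
    by_contra hcon
    push_neg at hcon
    have hle : cutNormSets (fun x y => W x y - stepFn W R x y) ≤ ε := by
      apply Real.sSup_le _ hε.le
      rintro r ⟨S, T, hS, hT, rfl⟩
      exact hcon S T hS hT
    exact absurd hdev (not_lt.mpr hle)
  set C : Fin 4 → Set I := fun k =>
    if k = 0 then S ∩ T else if k = 1 then S ∩ Tᶜ else if k = 2 then Sᶜ ∩ T else Sᶜ ∩ Tᶜ
    with hCdef
  have hC0 : C 0 = S ∩ T := by simp [hCdef]
  have hC1 : C 1 = S ∩ Tᶜ := by simp [hCdef]
  have hC2 : C 2 = Sᶜ ∩ T := by simp [hCdef]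
  have hC3 : C 3 = Sᶜ ∩ Tᶜ := by simp [hCdef]
  have hCm : ∀ k, MeasurableSet (C k) := by
    intro k
    simp only [hCdef]
    split_ifs
    · exact hS.inter hT
    · exact hS.inter hT.compl
    · exact hS.compl.inter hT
    · exact hS.compl.inter hT.compl
  have hCu : (⋃ k, C k) = Set.univ := by
    ext x
    simp only [Set.mem_iUnion, Set.mem_univ, iff_true]
    by_cases hxS : x ∈ S <;> by_cases hxT : x ∈ T
    · exact ⟨0, by rw [hC0]; exact ⟨hxS, hxT⟩⟩
    · exact ⟨1, by rw [hC1]; exact ⟨hxS, hxT⟩⟩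
    · exact ⟨2, by rw [hC2]; exact ⟨hxS, hxT⟩⟩
    · exact ⟨3, by rw [hC3]; exact ⟨hxS, hxT⟩⟩
  have hCS : ∀ k, C k ⊆ S ∨ C k ⊆ Sᶜ := by
    intro k
    simp only [hCdef]
    split_ifs <;>
      first
        | exact Or.inl Set.inter_subset_left
        | exact Or.inr Set.inter_subset_left
  have hCT : ∀ k, C k ⊆ T ∨ C k ⊆ Tᶜ := by
    intro k
    simp only [hCdef]
    split_ifs <;>
      first
        | exact Or.inl Set.inter_subset_right
        | exact Or.inr Set.inter_subset_right
  have hCd : ∀ k l : Fin 4, k ≠ l → Disjoint (C k) (C l) := by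
    have hall : ∀ m : Fin 4, m = 0 ∨ m = 1 ∨ m = 2 ∨ m = 3 := by decide
    intro k l hkl
    rcases hall k with rfl | rfl | rfl | rfl <;> rcases hall l with rfl | rfl | rfl | rfl <;>
      simp only [hC0, hC1, hC2, hC3] <;>
      first
        | exact absurd rfl hkl
        | exact disjoint_compl_right.mono Set.inter_subset_left Set.inter_subset_left
        | exact disjoint_compl_left.mono Set.inter_subset_left Set.inter_subset_left
        | exact disjoint_compl_right.mono Set.inter_subset_right Set.inter_subset_right
        | exact disjoint_compl_left.mono Set.inter_subset_right Set.inter_subset_right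
  set R' : Fin q × Fin 4 → Set I := fun p => R p.1 ∩ C p.2 with hR'def
  have hR'm : ∀ p, MeasurableSet (R' p) := fun p => (hRm p.1).inter (hCm p.2)
  have hR'd : Pairwise (Function.onFun Disjoint R') := by
    rintro ⟨i, k⟩ ⟨j, l⟩ hne
    show Disjoint (R' (i, k)) (R' (j, l))
    by_cases hij : i = j
    · subst hij
      have hkl : k ≠ l := by
        intro h; exact hne (by rw [h])
      exact ((hCd k l hkl).mono Set.inter_subset_right Set.inter_subset_right)
    · exact ((hRd hij).mono Set.inter_subset_left Set.inter_subset_left)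
  have hR'u : (⋃ p, R' p) = Set.univ := by
    ext x
    simp only [Set.mem_iUnion, Set.mem_univ, iff_true]
    have hx : x ∈ ⋃ i, R i := hRu ▸ Set.mem_univ x
    have hx' : x ∈ ⋃ k, C k := hCu ▸ Set.mem_univ x
    obtain ⟨i, hi⟩ := Set.mem_iUnion.mp hx
    obtain ⟨k, hk⟩ := Set.mem_iUnion.mp hx'
    exact ⟨(i, k), hi, hk⟩
  have hR'part : IsPartition R' := ⟨hR'm, hR'd, hR'u⟩
  have hRpart : IsPartition R := ⟨hRm, hRd, hRu⟩
  set f : I × I → ℝ := fun p => stepFn W R p.1 p.2 with hfdef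
  set f' : I × I → ℝ := fun p => stepFn W R' p.1 p.2 with hf'def
  have hWint : Integrable (fun p : I × I => W p.1 p.2) volume :=
    EnergyAux.integrable_W hWmeas hWrange
  have hfm : Measurable f := EnergyAux.measurable_stepFn W R hRm
  have hf'm : Measurable f' := EnergyAux.measurable_stepFn W R' hR'm
  have hfb : ∀ p : I × I, |f p| ≤ 1 := fun p =>
    abs_le.mpr ⟨by linarith [(EnergyAux.stepFn_mem_Icc hWmeas hWrange hRpart p.1 p.2).1],
      (EnergyAux.stepFn_mem_Icc hWmeas hWrange hRpart p.1 p.2).2⟩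
  have hf'b : ∀ p : I × I, |f' p| ≤ 1 := fun p =>
    abs_le.mpr ⟨by linarith [(EnergyAux.stepFn_mem_Icc hWmeas hWrange hR'part p.1 p.2).1],
      (EnergyAux.stepFn_mem_Icc hWmeas hWrange hR'part p.1 p.2).2⟩
  have hfint : Integrable f volume := EnergyAux.integrable_of_bdd hfm.aestronglyMeasurable 1 hfb
  have hf'int : Integrable f' volume :=
    EnergyAux.integrable_of_bdd hf'm.aestronglyMeasurable 1 hf'b
  have hcellR : ∀ i j : Fin q, ∫ p : I × I in R i ×ˢ R j, f p
      = ∫ p : I × I in R i ×ˢ R j, W p.1 p.2 := fun i j =>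
    EnergyAux.setIntegral_stepFn_cell hRm hRd i j
  have hcellR' : ∀ a b : Fin q × Fin 4, ∫ p : I × I in R' a ×ˢ R' b, f' p
      = ∫ p : I × I in R' a ×ˢ R' b, W p.1 p.2 := fun a b =>
    EnergyAux.setIntegral_stepFn_cell hR'm hR'd a b
  have hcover : ∀ i : Fin q, (⋃ k, R' (i, k)) = R i := by
    intro i
    have h : (⋃ k, R' (i, k)) = R i ∩ ⋃ k, C k := by
      rw [Set.inter_iUnion]
    rw [h, hCu, Set.inter_univ]
  have hsplit : ∀ i j : Fin q,
      (R i ×ˢ R j : Set (I × I)) = ⋃ kl : Fin 4 × Fin 4, R' (i, kl.1) ×ˢ R' (j, kl.2) := by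
    intro i j
    rw [Set.iUnion_prod (fun k => R' (i, k)) (fun l => R' (j, l)), hcover, hcover]
  have hsubdisj : ∀ i j : Fin q,
      Pairwise (Function.onFun Disjoint fun kl : Fin 4 × Fin 4 => R' (i, kl.1) ×ˢ R' (j, kl.2)) := by
    intro i j
    rintro ⟨k, l⟩ ⟨k', l'⟩ hne
    have h : k ≠ k' ∨ l ≠ l' := by
      by_contra hc; push_neg at hc; exact hne (by rw [hc.1, hc.2])
    rcases h with h | h
    · exact Set.disjoint_prod.mpr (Or.inl
        ((hCd k k' h).mono Set.inter_subset_right Set.inter_subset_right))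
    · exact Set.disjoint_prod.mpr (Or.inr
        ((hCd l l' h).mono Set.inter_subset_right Set.inter_subset_right))
  have hL4 : ∀ (h : I × I → ℝ), Integrable h volume → ∀ i j : Fin q,
      ∫ p : I × I in R i ×ˢ R j, h p
        = ∑ kl : Fin 4 × Fin 4, ∫ p : I × I in R' (i, kl.1) ×ˢ R' (j, kl.2), h p := by
    intro h hint i j
    rw [hsplit i j]
    exact integral_iUnion_fintype (fun kl => (hR'm (i, kl.1)).prod (hR'm (j, kl.2)))
      (hsubdisj i j) (fun kl => hint.integrableOn)
  have hcellRf' : ∀ i j : Fin q, ∫ p : I × I in R i ×ˢ R j, f' p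
      = ∫ p : I × I in R i ×ˢ R j, W p.1 p.2 := by
    intro i j
    rw [hL4 f' hf'int i j, hL4 (fun p => W p.1 p.2) hWint i j]
    exact Finset.sum_congr rfl fun kl _ => hcellR' (i, kl.1) (j, kl.2)
  have hprodint : Integrable (fun p : I × I => f p * (f' p - f p)) volume := by
    apply EnergyAux.integrable_of_bdd
      ((hfm.mul (hf'm.sub hfm)).aestronglyMeasurable) 2
    intro p
    calc |f p * (f' p - f p)| = |f p| * |f' p - f p| := abs_mul _ _
      _ ≤ 1 * 2 := by
          apply mul_le_mul (hfb p) _ (abs_nonneg _) zero_le_one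
          calc |f' p - f p| ≤ |f' p| + |f p| := abs_sub _ _
            _ ≤ 1 + 1 := add_le_add (hf'b p) (hfb p)
            _ = 2 := by norm_num
      _ = 2 := by norm_num
  have horth : ∫ p : I × I, f p * (f' p - f p) = 0 := by
    rw [EnergyAux.integral_eq_sum_cells hRpart hprodint]
    apply Finset.sum_eq_zero
    rintro ⟨i, j⟩ -
    have hconst : Set.EqOn (fun p : I × I => f p * (f' p - f p))
        (fun p : I × I => cellAvg W R i j * (f' p - f p)) (R i ×ˢ R j) := by
      intro p hp
      show f p * (f' p - f p) = cellAvg W R i j * (f' p - f p)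
      rw [show f p = stepFn W R p.1 p.2 from rfl,
        EnergyAux.stepFn_eq_cellAvg hRd hp.1 hp.2]
    rw [setIntegral_congr_fun ((hRm i).prod (hRm j)) hconst, integral_const_mul]
    have hzero : ∫ p : I × I in R i ×ˢ R j, (f' p - f p) = 0 := by
      rw [integral_sub hf'int.integrableOn hfint.integrableOn, hcellRf' i j, hcellR i j,
        sub_self]
    rw [hzero, mul_zero]
  have hSTmeas : MeasurableSet (S ×ˢ T) := hS.prod hT
  have hcut : ∫ p : I × I in S ×ˢ T, (f' p - W p.1 p.2) = 0 := by
    have hind : Integrable ((S ×ˢ T).indicator fun p : I × I => f' p - W p.1 p.2) volume :=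
      (hf'int.sub hWint).indicator hSTmeas
    rw [← integral_indicator hSTmeas,
      EnergyAux.integral_eq_sum_cells hR'part hind]
    apply Finset.sum_eq_zero
    rintro ⟨⟨i, k⟩, ⟨j, l⟩⟩ -
    have hcell : MeasurableSet (R' (i, k) ×ˢ R' (j, l)) := (hR'm _).prod (hR'm _)
    rcases hCS k with hk | hk
    · rcases hCT l with hl | hl
      · have hsub : R' (i, k) ×ˢ R' (j, l) ⊆ S ×ˢ T :=
          Set.prod_mono (Set.inter_subset_right.trans hk) (Set.inter_subset_right.trans hl)
        rw [setIntegral_congr_fun hcell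
          (fun p hp => Set.indicator_of_mem (hsub hp) _)]
        rw [integral_sub hf'int.integrableOn hWint.integrableOn, hcellR' (i, k) (j, l),
          sub_self]
      · rw [setIntegral_congr_fun hcell (g := fun _ => (0:ℝ))
          (fun p hp => Set.indicator_of_notMem (fun hmem => hl hp.2.2 hmem.2) _)]
        simp
    · rw [setIntegral_congr_fun hcell (g := fun _ => (0:ℝ))
        (fun p hp => Set.indicator_of_notMem (fun hmem => hk hp.1.2 hmem.1) _)]
      simp
  have hcut' : ∫ p : I × I in S ×ˢ T, f' p = ∫ p : I × I in S ×ˢ T, W p.1 p.2 := by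
    have h := integral_sub (hf'int.integrableOn (s := S ×ˢ T))
      (hWint.integrableOn (s := S ×ˢ T))
    rw [hcut] at h
    linarith [h]
  have hgabs : ε < |∫ p : I × I in S ×ˢ T, (f' p - f p)| := by
    have h1 : ∫ p : I × I in S ×ˢ T, (f' p - f p)
        = ∫ p : I × I in S ×ˢ T, (W p.1 p.2 - f p) := by
      rw [integral_sub hf'int.integrableOn hfint.integrableOn,
        integral_sub hWint.integrableOn hfint.integrableOn, hcut']
    rw [h1]
    exact hST
  have hgm : Measurable fun p : I × I => f' p - f p := hf'm.sub hfm
  have hgb : ∀ p : I × I, |f' p - f p| ≤ 2 := by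
    intro p
    calc |f' p - f p| ≤ |f' p| + |f p| := abs_sub _ _
      _ ≤ 1 + 1 := add_le_add (hf'b p) (hfb p)
      _ = 2 := by norm_num
  have hCS2 := abs_setIntegral_le_sqrt hgm 2 hgb (S ×ˢ T)
  have hsqnn : 0 ≤ ∫ p : I × I, (f' p - f p) ^ 2 :=
    integral_nonneg fun p => sq_nonneg _
  have hsqlt : ε ^ 2 < ∫ p : I × I, (f' p - f p) ^ 2 := by
    have h2 : ε < Real.sqrt (∫ p : I × I, (f' p - f p) ^ 2) := lt_of_lt_of_le hgabs hCS2
    have h3 : ε ^ 2 < Real.sqrt (∫ p : I × I, (f' p - f p) ^ 2) ^ 2 := by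
      apply pow_lt_pow_left₀ h2 hε.le
      norm_num
    rwa [Real.sq_sqrt hsqnn] at h3
  have hsqfint : Integrable (fun p : I × I => f p ^ 2) volume := by
    apply EnergyAux.integrable_of_bdd ((hfm.pow_const 2).aestronglyMeasurable) 1
    intro p
    rw [abs_pow]
    calc |f p| ^ 2 ≤ 1 ^ 2 := pow_le_pow_left₀ (abs_nonneg _) (hfb p) 2
      _ = 1 := one_pow 2
  have hsqgint : Integrable (fun p : I × I => (f' p - f p) ^ 2) volume := by
    apply EnergyAux.integrable_of_bdd (((hf'm.sub hfm).pow_const 2).aestronglyMeasurable) 4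
    intro p
    rw [abs_pow]
    calc |f' p - f p| ^ 2 ≤ 2 ^ 2 := pow_le_pow_left₀ (abs_nonneg _) (hgb p) 2
      _ = 4 := by norm_num
  have hexpand : ∫ p : I × I, f' p ^ 2
      = (∫ p : I × I, f p ^ 2) + ∫ p : I × I, (f' p - f p) ^ 2 := by
    have hptw : ∀ p : I × I, f' p ^ 2
        = f p ^ 2 + (f' p - f p) ^ 2 + 2 * (f p * (f' p - f p)) := fun p => by ring
    calc ∫ p : I × I, f' p ^ 2
        = ∫ p : I × I, (f p ^ 2 + (f' p - f p) ^ 2 + 2 * (f p * (f' p - f p))) :=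
          integral_congr_ae (Filter.Eventually.of_forall hptw)
      _ = (∫ p : I × I, (f p ^ 2 + (f' p - f p) ^ 2))
            + ∫ p : I × I, 2 * (f p * (f' p - f p)) :=
          integral_add (hsqfint.add hsqgint) (hprodint.const_mul 2)
      _ = (∫ p : I × I, f p ^ 2) + (∫ p : I × I, (f' p - f p) ^ 2)
            + 2 * ∫ p : I × I, f p * (f' p - f p) := by
          rw [integral_add hsqfint hsqgint, integral_const_mul]
      _ = (∫ p : I × I, f p ^ 2) + ∫ p : I × I, (f' p - f p) ^ 2 := by
          rw [horth]; ring
  refine ⟨R', hR'part, fun p => Set.inter_subset_left, ?_⟩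
  show (∫ p : I × I, f' p ^ 2) ≥ (∫ p : I × I, f p ^ 2) + ε ^ 2
  rw [hexpand]
  linarith [hsqlt]

end
end

section
/- Weak regularity lemma for tuples of hypergraphons: Let k ≥ 2, ε > 0, W₁,…,W_m be k-uniform hypergraphons, and Q a symmetric measurable partition of [0,1]^{r[k−1]}. Then there exists a symmetric partition Q' refining Q, with every part of Q refined into at most ⌈2^{km/ε²}⌉ parts, such that ‖W_i − (W_i)_{Q'}‖_{□^{k−1}} ≤ ε for each i = 1,…,m. -/
open MeasureTheory Finset
open scoped unitInterval

noncomputable section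

/-- `r_<[k]`: the nonempty proper subsets of `[k] = {1,…,k}`. -/
def PSub (k : ℕ) : Type := {A : Finset (Fin k) // A.Nonempty ∧ A ≠ Finset.univ}

instance (k : ℕ) : Fintype (PSub k) := by unfold PSub; infer_instance

/-- `r[j]`: the nonempty subsets of `[j]`. -/
def NSub (j : ℕ) : Type := {A : Finset (Fin j) // A.Nonempty}

instance (j : ℕ) : Fintype (NSub j) := by unfold NSub; infer_instance

/-- `r(V,m)` for `V = [n]`: nonempty subsets of `V` of size at most `m`. -/
def RSubV (n m : ℕ) : Type := {A : Finset (Fin n) // A.Nonempty ∧ A.card ≤ m}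

instance (n m : ℕ) : Fintype (RSubV n m) := by unfold RSubV; infer_instance

/-- The action of a permutation of `[k]` on `r_<[k]`. -/
def permPSub {k : ℕ} (τ : Equiv.Perm (Fin k)) (A : PSub k) : PSub k :=
  ⟨A.1.image τ, A.2.1.image τ, fun h => A.2.2 (Finset.eq_univ_of_card _ (by
    have hc := congrArg Finset.card h
    rwa [Finset.card_image_of_injective _ τ.injective, Finset.card_univ] at hc))⟩

/-- A `k`-uniform hypergraphon kernel is symmetric if it is invariant under the
coordinate permutations induced by permutations of `[k]`. -/
def IsSymmetricK {k : ℕ} (W : (PSub k → I) → ℝ) : Prop :=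
  ∀ (τ : Equiv.Perm (Fin k)) (x : PSub k → I), W (fun A => x (permPSub τ A)) = W x

/-- A `k`-uniform hypergraphon: a symmetric measurable function `[0,1]^{r_<[k]} → [0,1]`. -/
def IsHypergraphon {k : ℕ} (W : (PSub k → I) → ℝ) : Prop :=
  Measurable W ∧ IsSymmetricK W ∧ ∀ x, W x ∈ Set.Icc (0:ℝ) 1

/-- Given an edge `e` of size `k` in `[n]`, transport an index `A ∈ r_<[k]` to the
corresponding subset of `e` (via the order isomorphism `[k] ≃ e`), viewed in `r([n],k-1)`. -/
def edgeVar {n k : ℕ} (e : Finset (Fin n)) (he : e.card = k) (A : PSub k) :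
    RSubV n (k - 1) :=
  ⟨A.1.image (fun j => ((e.orderIsoOfFin he) j : Fin n)),
    A.2.1.image _, by
      rw [Finset.card_image_of_injective _
        (fun a b hab => (e.orderIsoOfFin he).injective (Subtype.ext hab))]
      refine Nat.le_pred_of_lt (lt_of_le_of_ne (by simpa using A.1.card_le_univ) ?_)
      exact fun hc => A.2.2 (Finset.eq_univ_of_card _ (by simpa using hc))⟩

/-- `t_α(F, W)`: homomorphism density of the `k`-uniform hypergraph with edge set `E`
on `[n]` in the tuple `W = (W_1,…,W_m)` of hypergraphon kernels, with edge `e`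
landing in `W_{α(e)}`. -/
def homDensityVec {n k m : ℕ} (E : Finset (Finset (Fin n))) (hE : ∀ e ∈ E, e.card = k)
    (W : Fin m → ((PSub k → I) → ℝ)) (α : Finset (Fin n) → Fin m) : ℝ :=
  ∫ x : RSubV n (k - 1) → I,
    ∏ e ∈ E.attach, W (α e.1) (fun A => x (edgeVar e.1 (hE e.1 e.2) A))

/-- `t(F, W)`: homomorphism density of a single hypergraphon kernel. -/
def homDensityK {n k : ℕ} (E : Finset (Finset (Fin n))) (hE : ∀ e ∈ E, e.card = k)
    (W : (PSub k → I) → ℝ) : ℝ :=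
  ∫ x : RSubV n (k - 1) → I,
    ∏ e ∈ E.attach, W (fun A => x (edgeVar e.1 (hE e.1 e.2) A))

/-- The order embedding `[k-1] → [k]` missing the element `i`. -/
def embMiss {k : ℕ} (hk : 1 ≤ k) (i : Fin k) (j : Fin (k - 1)) : Fin k :=
  Fin.cast (Nat.succ_pred_eq_of_pos hk)
    ((Fin.cast (Nat.succ_pred_eq_of_pos hk).symm i).succAbove j)

lemma embMiss_ne {k : ℕ} (hk : 1 ≤ k) (i : Fin k) (j : Fin (k - 1)) :
    embMiss hk i j ≠ i := by
  intro h
  apply Fin.succAbove_ne (Fin.cast (Nat.succ_pred_eq_of_pos hk).symm i) j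
  apply Fin.ext
  have := congrArg Fin.val h
  simpa [embMiss] using this

/-- Restriction `x ↦ x_{r([k]∖{i})}`, identified with a point of `[0,1]^{r[k-1]}`
via the order isomorphism `[k-1] ≃ [k]∖{i}`. -/
def projMiss {k : ℕ} (hk : 1 ≤ k) (i : Fin k) (x : PSub k → I) (A : NSub (k - 1)) : I :=
  x ⟨A.1.image (embMiss hk i), A.2.image _, fun hu => by
    have hi : i ∈ A.1.image (embMiss hk i) := hu ▸ Finset.mem_univ i
    obtain ⟨j, _, hj⟩ := Finset.mem_image.mp hi
    exact embMiss_ne hk i j hj⟩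

/-- The action of a permutation of `[j]` on `r[j]`. -/
def permNSub {j : ℕ} (τ : Equiv.Perm (Fin j)) (A : NSub j) : NSub j :=
  ⟨A.1.image τ, A.2.image τ⟩

/-- Symmetry for functions on `[0,1]^{r[j]}`. -/
def IsSymmetricFn {j : ℕ} (u : (NSub j → I) → ℝ) : Prop :=
  ∀ (τ : Equiv.Perm (Fin j)) (x : NSub j → I), u (fun A => x (permNSub τ A)) = u x

/-- The `(k-1)`-cut norm `‖W‖_{□^{k-1}}`: the supremum over symmetric measurable
`u_1,…,u_k : [0,1]^{r[k-1]} → [0,1]` of `|∫ W(x) ∏ᵢ uᵢ(x_{r([k]∖{i})}) dx|`. -/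
def cutNormK {k : ℕ} (hk : 1 ≤ k) (W : (PSub k → I) → ℝ) : ℝ :=
  sSup {r : ℝ | ∃ u : Fin k → ((NSub (k - 1) → I) → ℝ),
    (∀ i, Measurable (u i)) ∧ (∀ i, IsSymmetricFn (u i)) ∧
    (∀ i x, u i x ∈ Set.Icc (0:ℝ) 1) ∧
    r = |∫ x : PSub k → I, W x * ∏ i : Fin k, u i (projMiss hk i x)|}

/-- A subset of `[0,1]^{r[j]}` is symmetric if it is invariant under the coordinate
permutations induced by permutations of `[j]`. -/
def IsSymmSet {j : ℕ} (S : Set (NSub j → I)) : Prop :=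
  ∀ (τ : Equiv.Perm (Fin j)) (x : NSub j → I), x ∈ S → (fun A => x (permNSub τ A)) ∈ S

/-- A finite measurable partition of `[0,1]^{r[j]}`. -/
def IsMPartition {j : ℕ} {ι : Type*} (Q : ι → Set (NSub j → I)) : Prop :=
  (∀ i, MeasurableSet (Q i)) ∧ Pairwise (Function.onFun Disjoint Q) ∧
    (⋃ i, Q i) = Set.univ

/-- A symmetric finite measurable partition of `[0,1]^{r[j]}`. -/
def IsSymmPartition {j : ℕ} {ι : Type*} (Q : ι → Set (NSub j → I)) : Prop :=
  IsMPartition Q ∧ ∀ i, IsSymmSet (Q i)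

/-- The cell of `[0,1]^{r_<[k]}` indexed by `f ∈ [q]^k`, cut out by the `k` embedded
copies of the partition `Q` of `[0,1]^{r[k-1]}`. -/
def cellK {k : ℕ} (hk : 1 ≤ k) {ι : Type*} (Q : ι → Set (NSub (k - 1) → I))
    (f : Fin k → ι) : Set (PSub k → I) :=
  {x | ∀ i : Fin k, projMiss hk i x ∈ Q (f i)}

/-- The volume of the cell indexed by `f`. -/
def cellVol {k : ℕ} (hk : 1 ≤ k) {ι : Type*} (Q : ι → Set (NSub (k - 1) → I))
    (f : Fin k → ι) : ℝ :=
  (volume (cellK hk Q f)).toReal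

/-- The average of `W` over the cell indexed by `f` (zero for null cells). -/
def cellAvgK {k : ℕ} (hk : 1 ≤ k) {ι : Type*} (W : (PSub k → I) → ℝ)
    (Q : ι → Set (NSub (k - 1) → I)) (f : Fin k → ι) : ℝ :=
  if volume (cellK hk Q f) = 0 then 0
  else (∫ x in cellK hk Q f, W x) / (volume (cellK hk Q f)).toReal

/-- The stepping operator `W_Q`: replace `W` on each cell of the partition of
`[0,1]^{r_<[k]}` induced by `Q` by its average over that cell. -/
def stepK {k : ℕ} (hk : 1 ≤ k) {ι : Type*} [Fintype ι] [DecidableEq ι]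
    (W : (PSub k → I) → ℝ) (Q : ι → Set (NSub (k - 1) → I)) (x : PSub k → I) : ℝ :=
  ∑ f : Fin k → ι, Set.indicator (cellK hk Q f) (fun _ => cellAvgK hk W Q f) x

/-! ### Auxiliary development for the weak regularity lemma -/

section AuxWR

variable {k : ℕ}

lemma measurable_projMiss (hk : 1 ≤ k) (i : Fin k) : Measurable (projMiss hk i) :=
  measurable_pi_lambda _ (fun _ => measurable_pi_apply _)

lemma cellK_eq (hk : 1 ≤ k) {ι : Type*} (Q : ι → Set (NSub (k - 1) → I)) (f : Fin k → ι) :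
    cellK hk Q f = ⋂ i, projMiss hk i ⁻¹' Q (f i) := by
  ext x; simp [cellK]

lemma measurableSet_cellK (hk : 1 ≤ k) {ι : Type*} {Q : ι → Set (NSub (k - 1) → I)}
    (hQ : ∀ a, MeasurableSet (Q a)) (f : Fin k → ι) : MeasurableSet (cellK hk Q f) := by
  rw [cellK_eq]
  exact MeasurableSet.iInter fun i => (measurable_projMiss hk i) (hQ (f i))

lemma IsMPartition.existsUnique {j : ℕ} {ι : Type*} {Q : ι → Set (NSub j → I)}
    (hQ : IsMPartition Q) (y : NSub j → I) : ∃! a, y ∈ Q a := by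
  obtain ⟨hm, hd, hc⟩ := hQ
  have : y ∈ ⋃ a, Q a := hc ▸ Set.mem_univ y
  obtain ⟨a, ha⟩ := Set.mem_iUnion.mp this
  refine ⟨a, ha, fun b hb => ?_⟩
  by_contra hne
  exact (Set.disjoint_left.mp (hd hne)) hb ha

lemma cellK_pairwise_disjoint (hk : 1 ≤ k) {ι : Type*} {Q : ι → Set (NSub (k - 1) → I)}
    (hQ : IsMPartition Q) :
    Pairwise (Function.onFun Disjoint (fun f : Fin k → ι => cellK hk Q f)) := by
  intro f g hfg
  obtain ⟨i, hi⟩ := Function.ne_iff.mp hfg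
  refine Set.disjoint_left.mpr fun x hxf hxg => ?_
  obtain ⟨a, _, hu⟩ := hQ.existsUnique (projMiss hk i x)
  exact hi ((hu _ (hxf i)).trans (hu _ (hxg i)).symm)

lemma cellK_iUnion (hk : 1 ≤ k) {ι : Type*} {Q : ι → Set (NSub (k - 1) → I)}
    (hQ : IsMPartition Q) : (⋃ f : Fin k → ι, cellK hk Q f) = Set.univ := by
  refine Set.eq_univ_of_forall fun x => ?_
  refine Set.mem_iUnion.mpr ⟨fun i => (hQ.existsUnique (projMiss hk i x)).choose, fun i => ?_⟩
  exact (hQ.existsUnique (projMiss hk i x)).choose_spec.1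

/-- An integrable function's integral splits over the cells of a partition. -/
lemma integral_eq_sum_cells (hk : 1 ≤ k) {ι : Type*} [Fintype ι]
    {Q : ι → Set (NSub (k - 1) → I)} (hQ : IsMPartition Q)
    {g : (PSub k → I) → ℝ} (hg : Integrable g) :
    ∫ x, g x = ∑ f : Fin k → ι, ∫ x in cellK hk Q f, g x := by
  rw [← setIntegral_univ (μ := volume) (f := g), ← cellK_iUnion hk hQ,
    integral_iUnion (fun f => measurableSet_cellK hk hQ.1 f) (cellK_pairwise_disjoint hk hQ)
      (hg.integrableOn), tsum_fintype]

/-- Bounded measurable functions on the (probability) cube are integrable. -/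
lemma integrable_of_bdd {α : Type*} [MeasureSpace α] [IsProbabilityMeasure (volume : Measure α)]
    {g : α → ℝ} {C : ℝ} (hg : Measurable g) (hb : ∀ x, |g x| ≤ C) : Integrable g :=
  (integrable_const C).mono' hg.aestronglyMeasurable (Filter.Eventually.of_forall hb)

lemma integrable_mul_of_bdd {α : Type*} [MeasureSpace α]
    [IsProbabilityMeasure (volume : Measure α)] {f g : α → ℝ} {C D : ℝ}
    (hf : Measurable f) (hfb : ∀ x, |f x| ≤ C) (hg : Measurable g) (hgb : ∀ x, |g x| ≤ D) :
    Integrable (fun x => f x * g x) := by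
  refine integrable_of_bdd (C := C * D) (hf.mul hg) fun x => ?_
  rw [abs_mul]
  exact mul_le_mul (hfb x) (hgb x) (abs_nonneg _) ((abs_nonneg _).trans (hfb x))

end AuxWR
section AuxWR2

set_option linter.unusedSectionVars false

variable {k : ℕ} {ι : Type*} [Fintype ι] [DecidableEq ι]

lemma measurable_stepK (hk : 1 ≤ k) {W : (PSub k → I) → ℝ}
    {Q : ι → Set (NSub (k - 1) → I)} (hQ : ∀ a, MeasurableSet (Q a)) :
    Measurable (stepK hk W Q) := by
  refine Finset.measurable_sum _ fun f _ => ?_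
  exact Measurable.indicator measurable_const (measurableSet_cellK hk hQ f)

lemma stepK_apply (hk : 1 ≤ k) {W : (PSub k → I) → ℝ}
    {Q : ι → Set (NSub (k - 1) → I)} (hQ : IsMPartition Q)
    {f : Fin k → ι} {x : PSub k → I} (hx : x ∈ cellK hk Q f) :
    stepK hk W Q x = cellAvgK hk W Q f := by
  unfold stepK
  rw [Finset.sum_eq_single f]
  · rw [Set.indicator_of_mem hx]
  · intro g _ hgf
    have : x ∉ cellK hk Q g :=
      fun hxg => Set.disjoint_left.mp (cellK_pairwise_disjoint hk hQ hgf.symm) hx hxg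
    rw [Set.indicator_of_notMem this]
  · intro h; exact absurd (Finset.mem_univ f) h

lemma cellAvgK_mem_Icc (hk : 1 ≤ k) {W : (PSub k → I) → ℝ} (hWm : Measurable W)
    (hWb : ∀ x, W x ∈ Set.Icc (0:ℝ) 1)
    {Q : ι → Set (NSub (k - 1) → I)} (hQ : ∀ a, MeasurableSet (Q a)) (f : Fin k → ι) :
    cellAvgK hk W Q f ∈ Set.Icc (0:ℝ) 1 := by
  unfold cellAvgK
  split_ifs with h
  · exact ⟨le_refl 0, zero_le_one⟩
  have hvol : (0:ℝ) < (volume (cellK hk Q f)).toReal :=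
    ENNReal.toReal_pos h (measure_ne_top _ _)
  constructor
  · exact div_nonneg (setIntegral_nonneg (measurableSet_cellK hk hQ f)
      (fun x _ => (hWb x).1)) hvol.le
  · rw [div_le_one hvol]
    calc ∫ x in cellK hk Q f, W x ≤ ∫ _x in cellK hk Q f, (1:ℝ) := by
          refine setIntegral_mono_on ((integrable_of_bdd (C := 1) hWm
            (fun x => abs_le.mpr ⟨by linarith [(hWb x).1], (hWb x).2⟩)).integrableOn)
            (integrable_const 1).integrableOn (measurableSet_cellK hk hQ f)
            (fun x _ => (hWb x).2)
      _ = (volume (cellK hk Q f)).toReal := by simp [measureReal_def]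

lemma stepK_mem_Icc (hk : 1 ≤ k) {W : (PSub k → I) → ℝ} (hWm : Measurable W)
    (hWb : ∀ x, W x ∈ Set.Icc (0:ℝ) 1)
    {Q : ι → Set (NSub (k - 1) → I)} (hQ : IsMPartition Q) (x : PSub k → I) :
    stepK hk W Q x ∈ Set.Icc (0:ℝ) 1 := by
  have hx : x ∈ ⋃ f : Fin k → ι, cellK hk Q f := (cellK_iUnion hk hQ) ▸ Set.mem_univ x
  obtain ⟨f, hf⟩ := Set.mem_iUnion.mp hx
  rw [stepK_apply hk hQ hf]
  exact cellAvgK_mem_Icc hk hWm hWb hQ.1 f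

/-- The integral of `W` over a cell equals average times volume. -/
lemma setIntegral_cellK (hk : 1 ≤ k) {W : (PSub k → I) → ℝ}
    (Q : ι → Set (NSub (k - 1) → I)) (f : Fin k → ι) :
    ∫ x in cellK hk Q f, W x = cellAvgK hk W Q f * cellVol hk Q f := by
  unfold cellAvgK cellVol
  split_ifs with h
  · rw [Measure.restrict_eq_zero.mpr h]; simp
  · have hvol : (0:ℝ) < (volume (cellK hk Q f)).toReal :=
      ENNReal.toReal_pos h (measure_ne_top _ _)
    field_simp

lemma setIntegral_stepK (hk : 1 ≤ k) {W : (PSub k → I) → ℝ}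
    {Q : ι → Set (NSub (k - 1) → I)} (hQ : IsMPartition Q) (f : Fin k → ι) :
    ∫ x in cellK hk Q f, stepK hk W Q x = cellAvgK hk W Q f * cellVol hk Q f := by
  have : ∀ x ∈ cellK hk Q f, stepK hk W Q x = cellAvgK hk W Q f :=
    fun x hx => stepK_apply hk hQ hx
  rw [setIntegral_congr_fun (measurableSet_cellK hk hQ.1 f) this]
  rw [setIntegral_const, smul_eq_mul, mul_comm]
  rfl

lemma abs_cellAvgK_le_one (hk : 1 ≤ k) {W : (PSub k → I) → ℝ} (hWm : Measurable W)
    (hWb : ∀ x, |W x| ≤ 1) {Q : ι → Set (NSub (k - 1) → I)} (hQm : ∀ a, MeasurableSet (Q a))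
    (f : Fin k → ι) : |cellAvgK hk W Q f| ≤ 1 := by
  have hWi : Integrable W := integrable_of_bdd hWm hWb
  unfold cellAvgK
  split_ifs with h
  · simp
  have hvol : (0:ℝ) < (volume (cellK hk Q f)).toReal :=
    ENNReal.toReal_pos h (measure_ne_top _ _)
  rw [abs_div, abs_of_pos hvol, div_le_one hvol]
  calc |∫ x in cellK hk Q f, W x| ≤ ∫ x in cellK hk Q f, |W x| := by
        simpa [Real.norm_eq_abs] using
          norm_integral_le_integral_norm (μ := volume.restrict (cellK hk Q f)) W
    _ ≤ ∫ _x in cellK hk Q f, (1:ℝ) :=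
        setIntegral_mono_on hWi.abs.integrableOn (integrable_const 1).integrableOn
          (measurableSet_cellK hk hQm f) (fun x _ => hWb x)
    _ = (volume (cellK hk Q f)).toReal := by simp [measureReal_def]

lemma abs_stepK_le_one (hk : 1 ≤ k) {W : (PSub k → I) → ℝ} (hWm : Measurable W)
    (hWb : ∀ x, |W x| ≤ 1) {Q : ι → Set (NSub (k - 1) → I)} (hQ : IsMPartition Q)
    (x : PSub k → I) : |stepK hk W Q x| ≤ 1 := by
  have hx : x ∈ ⋃ f : Fin k → ι, cellK hk Q f := (cellK_iUnion hk hQ) ▸ Set.mem_univ x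
  obtain ⟨f, hf⟩ := Set.mem_iUnion.mp hx
  rw [stepK_apply hk hQ hf]
  exact abs_cellAvgK_le_one hk hWm hWb hQ.1 f

/-- Orthogonality: `W - stepK W Q` integrates to zero against cell-constant functions. -/
lemma integral_sub_stepK_mul (hk : 1 ≤ k) {W : (PSub k → I) → ℝ} (hWm : Measurable W)
    (hWb : ∀ x, |W x| ≤ 1)
    {Q : ι → Set (NSub (k - 1) → I)} (hQ : IsMPartition Q)
    {g : (PSub k → I) → ℝ} (hgm : Measurable g) (hgb : ∀ x, |g x| ≤ 1)
    {c : (Fin k → ι) → ℝ} (hgc : ∀ f, ∀ x ∈ cellK hk Q f, g x = c f) :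
    ∫ x, (W x - stepK hk W Q x) * g x = 0 := by
  have hWi : Integrable W := integrable_of_bdd hWm hWb
  have hsm : Measurable (stepK hk W Q) := measurable_stepK hk hQ.1
  have hsb : ∀ x, |stepK hk W Q x| ≤ 1 := abs_stepK_le_one hk hWm hWb hQ
  have hinteg : Integrable (fun x => (W x - stepK hk W Q x) * g x) := by
    refine integrable_of_bdd (C := 2) (((hWm.sub hsm).mul hgm)) (fun x => ?_)
    calc |(W x - stepK hk W Q x) * g x| = |W x - stepK hk W Q x| * |g x| := abs_mul _ _
      _ ≤ 2 * 1 := by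
          refine mul_le_mul ?_ (hgb x) (abs_nonneg _) (by norm_num)
          calc |W x - stepK hk W Q x| ≤ |W x| + |stepK hk W Q x| := abs_sub _ _
            _ ≤ 2 := by linarith [hWb x, hsb x]
      _ = 2 := by ring
  rw [integral_eq_sum_cells hk hQ hinteg]
  refine Finset.sum_eq_zero fun f _ => ?_
  have heq : ∀ x ∈ cellK hk Q f, (W x - stepK hk W Q x) * g x
      = (W x - stepK hk W Q x) * c f := by
    intro x hx; rw [hgc f x hx]
  rw [setIntegral_congr_fun (measurableSet_cellK hk hQ.1 f) heq, integral_mul_const,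
    integral_sub hWi.integrableOn (integrable_of_bdd hsm hsb).integrableOn,
    setIntegral_cellK hk Q f, setIntegral_stepK hk hQ f, sub_self, zero_mul]

end AuxWR2
section AuxWR3

set_option linter.unusedSectionVars false

variable {k : ℕ}

lemma permNSub_permNSub {j : ℕ} (τ₁ τ₂ : Equiv.Perm (Fin j)) (A : NSub j) :
    permNSub τ₁ (permNSub τ₂ A) = permNSub (τ₁ * τ₂) A := by
  unfold permNSub
  refine Subtype.ext ?_
  simp [Finset.image_image, Function.comp]

lemma permNSub_one {j : ℕ} (A : NSub j) : permNSub 1 A = A := by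
  unfold permNSub
  refine Subtype.ext ?_
  simp

lemma IsSymmSet.compl {j : ℕ} {S : Set (NSub j → I)} (hS : IsSymmSet S) : IsSymmSet Sᶜ := by
  intro τ x hx hmem
  have h2 := hS τ⁻¹ _ hmem
  have : (fun A => x (permNSub τ (permNSub τ⁻¹ A))) ∈ S := h2
  simp only [permNSub_permNSub, mul_inv_cancel, permNSub_one] at this
  exact hx this

lemma IsSymmSet.inter {j : ℕ} {S T : Set (NSub j → I)} (hS : IsSymmSet S)
    (hT : IsSymmSet T) : IsSymmSet (S ∩ T) :=
  fun τ x hx => ⟨hS τ x hx.1, hT τ x hx.2⟩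

lemma IsSymmSet.iInter {j : ℕ} {α : Type*} {S : α → Set (NSub j → I)}
    (hS : ∀ a, IsSymmSet (S a)) : IsSymmSet (⋂ a, S a) := by
  intro τ x hx
  simp only [Set.mem_iInter] at hx ⊢
  exact fun a => hS a τ x (hx a)

/-- Refinement of a partition of `[0,1]^{r[k-1]}` by `k` further sets. -/
def refineP {ι : Type*} (P : ι → Set (NSub (k - 1) → I)) (S : Fin k → Set (NSub (k - 1) → I)) :
    ι × (Fin k → Bool) → Set (NSub (k - 1) → I) :=
  fun ab => P ab.1 ∩ ⋂ j, (if ab.2 j then S j else (S j)ᶜ)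

lemma refineP_subset {ι : Type*} (P : ι → Set (NSub (k - 1) → I))
    (S : Fin k → Set (NSub (k - 1) → I)) (ab : ι × (Fin k → Bool)) :
    refineP P S ab ⊆ P ab.1 :=
  Set.inter_subset_left

lemma refineP_isMPartition {ι : Type*} {P : ι → Set (NSub (k - 1) → I)}
    (hP : IsMPartition P) {S : Fin k → Set (NSub (k - 1) → I)}
    (hS : ∀ j, MeasurableSet (S j)) : IsMPartition (refineP P S) := by
  refine ⟨fun ab => (hP.1 ab.1).inter (MeasurableSet.iInter fun j => ?_), ?_, ?_⟩
  · split_ifs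
    · exact hS j
    · exact (hS j).compl
  · rintro ⟨a, b⟩ ⟨a', b'⟩ hne
    by_cases ha : a = a'
    · subst ha
      have hb : b ≠ b' := fun h => hne (by rw [h])
      obtain ⟨j, hj⟩ := Function.ne_iff.mp hb
      refine Set.disjoint_left.mpr fun y hy hy' => ?_
      have h1 := Set.mem_iInter.mp hy.2 j
      have h2 := Set.mem_iInter.mp hy'.2 j
      rcases Bool.eq_false_or_eq_true (b j) with h | h <;>
        rcases Bool.eq_false_or_eq_true (b' j) with h' | h' <;>
        simp_all
    · exact Set.disjoint_left.mpr fun y hy hy' =>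
        Set.disjoint_left.mp (hP.2.1 ha) hy.1 hy'.1
  · refine Set.eq_univ_of_forall fun y => ?_
    classical
    obtain ⟨a, ha, _⟩ := hP.existsUnique y
    refine Set.mem_iUnion.mpr ⟨(a, fun j => decide (y ∈ S j)), ha, ?_⟩
    refine Set.mem_iInter.mpr fun j => ?_
    by_cases hy : y ∈ S j <;> simp [hy]

lemma refineP_isSymmPartition {ι : Type*} {P : ι → Set (NSub (k - 1) → I)}
    (hP : IsSymmPartition P) {S : Fin k → Set (NSub (k - 1) → I)}
    (hS : ∀ j, MeasurableSet (S j)) (hSs : ∀ j, IsSymmSet (S j)) :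
    IsSymmPartition (refineP P S) := by
  refine ⟨refineP_isMPartition hP.1 hS, fun ab => ?_⟩
  refine (hP.2 ab.1).inter (IsSymmSet.iInter fun j => ?_)
  split_ifs
  · exact hSs j
  · exact (hSs j).compl

end AuxWR3
section AuxWR4

set_option linter.unusedSectionVars false

variable {k : ℕ} {ι : Type*} [Fintype ι] [DecidableEq ι]

/-- The energy (index) of a stepping of `W` by the partition `Q`. -/
def energyK (hk : 1 ≤ k) (W : (PSub k → I) → ℝ) (Q : ι → Set (NSub (k - 1) → I)) : ℝ :=
  ∑ f : Fin k → ι, cellVol hk Q f * (cellAvgK hk W Q f)^2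

lemma cellVol_nonneg (hk : 1 ≤ k) (Q : ι → Set (NSub (k - 1) → I)) (f : Fin k → ι) :
    0 ≤ cellVol hk Q f := ENNReal.toReal_nonneg

lemma energyK_nonneg (hk : 1 ≤ k) (W : (PSub k → I) → ℝ) (Q : ι → Set (NSub (k - 1) → I)) :
    0 ≤ energyK hk W Q :=
  Finset.sum_nonneg fun f _ => mul_nonneg (cellVol_nonneg hk Q f) (sq_nonneg _)

lemma sum_cellVol (hk : 1 ≤ k) {Q : ι → Set (NSub (k - 1) → I)} (hQ : IsMPartition Q) :
    ∑ f : Fin k → ι, cellVol hk Q f = 1 := by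
  have h := integral_eq_sum_cells hk hQ (g := fun _ => (1:ℝ)) (integrable_const 1)
  simp only [setIntegral_const, smul_eq_mul, mul_one, integral_const, measure_univ,
    ENNReal.toReal_one, one_smul, Measure.restrict_apply_univ] at h
  simpa [cellVol, measureReal_def] using h.symm

lemma energyK_le_one (hk : 1 ≤ k) {W : (PSub k → I) → ℝ} (hWm : Measurable W)
    (hWb : ∀ x, W x ∈ Set.Icc (0:ℝ) 1) {Q : ι → Set (NSub (k - 1) → I)}
    (hQ : IsMPartition Q) : energyK hk W Q ≤ 1 := by
  calc energyK hk W Q ≤ ∑ f : Fin k → ι, cellVol hk Q f := by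
        refine Finset.sum_le_sum fun f _ => ?_
        have h := cellAvgK_mem_Icc hk hWm hWb hQ.1 f
        calc cellVol hk Q f * (cellAvgK hk W Q f)^2 ≤ cellVol hk Q f * 1 := by
              refine mul_le_mul_of_nonneg_left ?_ (cellVol_nonneg hk Q f)
              calc (cellAvgK hk W Q f)^2 ≤ 1^2 := by
                    refine pow_le_pow_left₀ ?_ h.2 2
                    exact h.1
                _ = 1 := one_pow 2
          _ = cellVol hk Q f := mul_one _
    _ = 1 := sum_cellVol hk hQ

/-- Parent cell-index of a refined cell-index. -/
def parC {B : Type*} (f' : Fin k → ι × B) : Fin k → ι := fun i => (f' i).1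

lemma cellK_refine_subset (hk : 1 ≤ k) (P : ι → Set (NSub (k - 1) → I))
    (S : Fin k → Set (NSub (k - 1) → I)) (f' : Fin k → ι × (Fin k → Bool)) :
    cellK hk (refineP P S) f' ⊆ cellK hk P (parC f') :=
  fun x hx i => refineP_subset P S (f' i) (hx i)

lemma cellK_eq_biUnion_refine (hk : 1 ≤ k) {P : ι → Set (NSub (k - 1) → I)}
    (hP : IsMPartition P) {S : Fin k → Set (NSub (k - 1) → I)}
    (hS : ∀ j, MeasurableSet (S j)) (f : Fin k → ι) :
    cellK hk P f =
      ⋃ f' ∈ Finset.univ.filter (fun f' : Fin k → ι × (Fin k → Bool) => parC f' = f),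
        cellK hk (refineP P S) f' := by
  have hP' := refineP_isMPartition hP hS
  ext x
  constructor
  · intro hx
    have hcov : x ∈ ⋃ f' : Fin k → ι × (Fin k → Bool), cellK hk (refineP P S) f' :=
      (cellK_iUnion hk hP') ▸ Set.mem_univ x
    obtain ⟨f', hf'⟩ := Set.mem_iUnion.mp hcov
    have hpar : parC f' = f := by
      funext i
      exact (hP.existsUnique (projMiss hk i x)).unique
        (refineP_subset P S (f' i) (hf' i)) (hx i)
    exact Set.mem_biUnion (Finset.mem_filter.mpr ⟨Finset.mem_univ _, hpar⟩) hf'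
  · intro hx
    obtain ⟨f', hf'mem, hxf'⟩ := Set.mem_iUnion₂.mp hx
    have := Finset.mem_filter.mp hf'mem
    exact this.2 ▸ cellK_refine_subset hk P S f' hxf'

lemma setIntegral_cellK_refine (hk : 1 ≤ k) {P : ι → Set (NSub (k - 1) → I)}
    (hP : IsMPartition P) {S : Fin k → Set (NSub (k - 1) → I)}
    (hS : ∀ j, MeasurableSet (S j)) (f : Fin k → ι)
    {g : (PSub k → I) → ℝ} (hg : Integrable g) :
    ∫ x in cellK hk P f, g x =
      ∑ f' ∈ Finset.univ.filter (fun f' : Fin k → ι × (Fin k → Bool) => parC f' = f),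
        ∫ x in cellK hk (refineP P S) f', g x := by
  have hP' := refineP_isMPartition hP hS
  rw [cellK_eq_biUnion_refine hk hP hS f]
  refine integral_biUnion_finset _ (fun f' _ => measurableSet_cellK hk hP'.1 f')
    (fun f' _ g' _ hne => cellK_pairwise_disjoint hk hP' hne) (fun f' _ => hg.integrableOn)

lemma cellVol_refine (hk : 1 ≤ k) {P : ι → Set (NSub (k - 1) → I)}
    (hP : IsMPartition P) {S : Fin k → Set (NSub (k - 1) → I)}
    (hS : ∀ j, MeasurableSet (S j)) (f : Fin k → ι) :
    cellVol hk P f =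
      ∑ f' ∈ Finset.univ.filter (fun f' : Fin k → ι × (Fin k → Bool) => parC f' = f),
        cellVol hk (refineP P S) f' := by
  have h := setIntegral_cellK_refine hk hP hS f (g := fun _ => (1:ℝ)) (integrable_const 1)
  simpa only [setIntegral_const, smul_eq_mul, mul_one, measureReal_def, cellVol] using h

lemma cellMass_refine (hk : 1 ≤ k) {W : (PSub k → I) → ℝ} (hWm : Measurable W)
    (hWb : ∀ x, |W x| ≤ 1) {P : ι → Set (NSub (k - 1) → I)}
    (hP : IsMPartition P) {S : Fin k → Set (NSub (k - 1) → I)}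
    (hS : ∀ j, MeasurableSet (S j)) (f : Fin k → ι) :
    cellAvgK hk W P f * cellVol hk P f =
      ∑ f' ∈ Finset.univ.filter (fun f' : Fin k → ι × (Fin k → Bool) => parC f' = f),
        cellAvgK hk W (refineP P S) f' * cellVol hk (refineP P S) f' := by
  rw [← setIntegral_cellK hk P f,
    setIntegral_cellK_refine hk hP hS f (integrable_of_bdd hWm hWb)]
  exact Finset.sum_congr rfl fun f' _ => setIntegral_cellK hk (refineP P S) f'

/-- Exact energy increment identity under refinement. -/
lemma energyK_refine (hk : 1 ≤ k) {W : (PSub k → I) → ℝ} (hWm : Measurable W)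
    (hWb : ∀ x, |W x| ≤ 1) {P : ι → Set (NSub (k - 1) → I)}
    (hP : IsMPartition P) {S : Fin k → Set (NSub (k - 1) → I)}
    (hS : ∀ j, MeasurableSet (S j)) :
    energyK hk W (refineP P S) = energyK hk W P +
      ∑ f' : Fin k → ι × (Fin k → Bool), cellVol hk (refineP P S) f' *
        (cellAvgK hk W (refineP P S) f' - cellAvgK hk W P (parC f'))^2 := by
  classical
  set P' := refineP P S with hP'def
  have key : ∀ f : Fin k → ι,
      ∑ f' ∈ Finset.univ.filter (fun f' : Fin k → ι × (Fin k → Bool) => parC f' = f),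
        cellVol hk P' f' * (cellAvgK hk W P' f')^2
      = cellVol hk P f * (cellAvgK hk W P f)^2 +
        ∑ f' ∈ Finset.univ.filter (fun f' : Fin k → ι × (Fin k → Bool) => parC f' = f),
          cellVol hk P' f' * (cellAvgK hk W P' f' - cellAvgK hk W P f)^2 := by
    intro f
    have hV := cellVol_refine hk hP hS f
    have hM := cellMass_refine hk hWm hWb hP hS f
    set c := cellAvgK hk W P f
    have expand : ∀ f' : Fin k → ι × (Fin k → Bool),
        cellVol hk P' f' * (cellAvgK hk W P' f' - c)^2
        = cellVol hk P' f' * (cellAvgK hk W P' f')^2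
          - 2 * c * (cellAvgK hk W P' f' * cellVol hk P' f') + c^2 * cellVol hk P' f' := by
      intro f'; ring
    rw [Finset.sum_congr rfl (fun f' _ => expand f')]
    rw [Finset.sum_add_distrib, Finset.sum_sub_distrib, ← Finset.mul_sum, ← Finset.mul_sum,
      ← hM, ← hV]
    ring
  have group : energyK hk W P' =
      ∑ f : Fin k → ι,
        ∑ f' ∈ Finset.univ.filter (fun f' : Fin k → ι × (Fin k → Bool) => parC f' = f),
          cellVol hk P' f' * (cellAvgK hk W P' f')^2 := by
    rw [Finset.sum_fiberwise_of_maps_to (fun f' _ => Finset.mem_univ (parC f'))]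
    rfl
  have group2 : ∑ f' : Fin k → ι × (Fin k → Bool), cellVol hk P' f' *
        (cellAvgK hk W P' f' - cellAvgK hk W P (parC f'))^2
      = ∑ f : Fin k → ι,
        ∑ f' ∈ Finset.univ.filter (fun f' : Fin k → ι × (Fin k → Bool) => parC f' = f),
          cellVol hk P' f' * (cellAvgK hk W P' f' - cellAvgK hk W P f)^2 := by
    rw [← Finset.sum_fiberwise_of_maps_to (fun f' _ => Finset.mem_univ (parC f'))]
    refine Finset.sum_congr rfl fun f hf => ?_
    refine Finset.sum_congr rfl fun f' hf' => ?_
    rw [(Finset.mem_filter.mp hf').2]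
  rw [group, group2, Finset.sum_congr rfl (fun f _ => key f), Finset.sum_add_distrib]
  rfl

end AuxWR4
section AuxWR5

set_option linter.unusedSectionVars false

variable {k : ℕ} {ι : Type*} [Fintype ι] [DecidableEq ι]

lemma energyK_mono_refine (hk : 1 ≤ k) {W : (PSub k → I) → ℝ} (hWm : Measurable W)
    (hWb : ∀ x, |W x| ≤ 1) {P : ι → Set (NSub (k - 1) → I)} (hP : IsMPartition P)
    {S : Fin k → Set (NSub (k - 1) → I)} (hS : ∀ j, MeasurableSet (S j)) :
    energyK hk W P ≤ energyK hk W (refineP P S) := by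
  rw [energyK_refine hk hWm hWb hP hS]
  have : (0:ℝ) ≤ ∑ f' : Fin k → ι × (Fin k → Bool), cellVol hk (refineP P S) f' *
      (cellAvgK hk W (refineP P S) f' - cellAvgK hk W P (parC f'))^2 :=
    Finset.sum_nonneg fun f' _ => mul_nonneg (cellVol_nonneg hk _ f') (sq_nonneg _)
  linarith

lemma energy_increment_s10 (hk : 1 ≤ k) {W : (PSub k → I) → ℝ} (hWm : Measurable W)
    (hWb : ∀ x, |W x| ≤ 1) {P : ι → Set (NSub (k - 1) → I)} (hP : IsMPartition P)
    {S : Fin k → Set (NSub (k - 1) → I)} (hS : ∀ j, MeasurableSet (S j))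
    {ε : ℝ} (hε : 0 ≤ ε)
    (hgap : ε < |∫ x, (W x - stepK hk W P x) *
      ∏ j, (S j).indicator (fun _ => (1:ℝ)) (projMiss hk j x)|) :
    energyK hk W P + ε^2 < energyK hk W (refineP P S) := by
  classical
  have hP' : IsMPartition (refineP P S) := refineP_isMPartition hP hS
  set P' := refineP P S with hP'def
  set g : (PSub k → I) → ℝ :=
    fun x => ∏ j, (S j).indicator (fun _ => (1:ℝ)) (projMiss hk j x) with hgdef
  have hgm : Measurable g := by
    refine Finset.measurable_prod _ fun j _ => ?_
    exact (measurable_const.indicator (hS j)).comp (measurable_projMiss hk j)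
  have hgb : ∀ x, |g x| ≤ 1 := by
    intro x
    rw [abs_le]
    constructor
    · have : (0:ℝ) ≤ g x :=
        Finset.prod_nonneg fun j _ => Set.indicator_nonneg (fun _ _ => zero_le_one) _
      linarith
    · refine Finset.prod_le_one (fun j _ => Set.indicator_nonneg (fun _ _ => zero_le_one) _)
        (fun j _ => ?_)
      by_cases h : projMiss hk j x ∈ S j <;> simp [h]
  set c : (Fin k → ι × (Fin k → Bool)) → ℝ :=
    fun f' => ∏ j, (if (f' j).2 j then (1:ℝ) else 0) with hcdef
  have hc : ∀ f', ∀ x ∈ cellK hk P' f', g x = c f' := by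
    intro f' x hx
    refine Finset.prod_congr rfl fun j _ => ?_
    have h2 := Set.mem_iInter.mp (hx j).2 j
    by_cases hb : (f' j).2 j
    · rw [if_pos hb]; rw [if_pos hb] at h2
      exact Set.indicator_of_mem h2 _
    · rw [if_neg hb]; rw [if_neg hb] at h2
      exact Set.indicator_of_notMem h2 _
  have hcb : ∀ f', |c f'| ≤ 1 := by
    intro f'
    rw [abs_le]
    constructor
    · have : (0:ℝ) ≤ c f' := Finset.prod_nonneg fun j _ => by split_ifs <;> norm_num
      linarith
    · exact Finset.prod_le_one (fun j _ => by split_ifs <;> norm_num)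
        (fun j _ => by split_ifs <;> norm_num)
  have hsPm : Measurable (stepK hk W P) := measurable_stepK hk hP.1
  have hsP'm : Measurable (stepK hk W P') := measurable_stepK hk hP'.1
  have hsPb := abs_stepK_le_one hk hWm hWb hP
  have hsP'b := abs_stepK_le_one hk hWm hWb hP'
  -- integrability
  have hiB : Integrable (fun x => (stepK hk W P' x - stepK hk W P x) * g x) :=
    integrable_mul_of_bdd (C := 2) (D := 1) (hsP'm.sub hsPm)
      (fun x => (abs_sub _ _).trans (by linarith [hsP'b x, hsPb x])) hgm hgb
  have hiA : Integrable (fun x => (W x - stepK hk W P' x) * g x) :=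
    integrable_mul_of_bdd (C := 2) (D := 1) (hWm.sub hsP'm)
      (fun x => (abs_sub _ _).trans (by linarith [hWb x, hsP'b x])) hgm hgb
  -- orthogonality and splitting
  have horth : ∫ x, (W x - stepK hk W P' x) * g x = 0 :=
    integral_sub_stepK_mul hk hWm hWb hP' hgm hgb hc
  have hsplit : ∫ x, (W x - stepK hk W P x) * g x
      = ∫ x, (stepK hk W P' x - stepK hk W P x) * g x := by
    have e1 : (fun x => (W x - stepK hk W P x) * g x)
        = fun x => ((W x - stepK hk W P' x) * g x
          + (stepK hk W P' x - stepK hk W P x) * g x) := funext fun x => by ring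
    rw [e1, integral_add hiA hiB, horth, zero_add]
  -- value of the inner integral
  set d : (Fin k → ι × (Fin k → Bool)) → ℝ :=
    fun f' => cellAvgK hk W P' f' - cellAvgK hk W P (parC f') with hddef
  have hval : ∫ x, (stepK hk W P' x - stepK hk W P x) * g x
      = ∑ f' : Fin k → ι × (Fin k → Bool), d f' * c f' * cellVol hk P' f' := by
    rw [integral_eq_sum_cells hk hP' hiB]
    refine Finset.sum_congr rfl fun f' _ => ?_
    have heq : ∀ x ∈ cellK hk P' f',
        (stepK hk W P' x - stepK hk W P x) * g x = d f' * c f' := by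
      intro x hx
      rw [stepK_apply hk hP' hx, stepK_apply hk hP (cellK_refine_subset hk P S f' hx),
        hc f' x hx]
    rw [setIntegral_congr_fun (measurableSet_cellK hk hP'.1 f') heq, setIntegral_const,
      smul_eq_mul, mul_comm]
    rfl
  -- bound by the L¹-type sum, then Cauchy-Schwarz
  set s : ℝ := ∑ f' : Fin k → ι × (Fin k → Bool), cellVol hk P' f' * |d f'| with hsdef
  have habs : |∑ f' : Fin k → ι × (Fin k → Bool), d f' * c f' * cellVol hk P' f'| ≤ s := by
    refine (Finset.abs_sum_le_sum_abs _ _).trans (Finset.sum_le_sum fun f' _ => ?_)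
    rw [abs_mul, abs_mul, abs_of_nonneg (cellVol_nonneg hk P' f')]
    have h1 := hcb f'
    have h2 := abs_nonneg (d f')
    have h3 := cellVol_nonneg hk P' f'
    have h4 := abs_nonneg (c f')
    nlinarith [mul_nonneg (mul_nonneg h2 h3) (sub_nonneg.mpr h1)]
  set Δ : ℝ := ∑ f' : Fin k → ι × (Fin k → Bool), cellVol hk P' f' * (d f')^2 with hΔdef
  have hCS : s^2 ≤ Δ := by
    have h := Finset.sum_mul_sq_le_sq_mul_sq Finset.univ
      (fun f' : Fin k → ι × (Fin k → Bool) => Real.sqrt (cellVol hk P' f'))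
      (fun f' => Real.sqrt (cellVol hk P' f') * |d f'|)
    have e1 : ∑ f' : Fin k → ι × (Fin k → Bool),
        Real.sqrt (cellVol hk P' f') * (Real.sqrt (cellVol hk P' f') * |d f'|) = s := by
      refine Finset.sum_congr rfl fun f' _ => ?_
      rw [← mul_assoc, Real.mul_self_sqrt (cellVol_nonneg hk P' f')]
    have e2 : ∑ f' : Fin k → ι × (Fin k → Bool), (Real.sqrt (cellVol hk P' f'))^2 = 1 := by
      rw [Finset.sum_congr rfl
        (fun f' _ => Real.sq_sqrt (cellVol_nonneg hk P' f'))]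
      exact sum_cellVol hk hP'
    have e3 : ∑ f' : Fin k → ι × (Fin k → Bool),
        (Real.sqrt (cellVol hk P' f') * |d f'|)^2 = Δ := by
      refine Finset.sum_congr rfl fun f' _ => ?_
      rw [mul_pow, Real.sq_sqrt (cellVol_nonneg hk P' f'), sq_abs]
    rw [e1, e2, e3, one_mul] at h
    exact h
  have hεs : ε < s := by
    rw [hsplit, hval] at hgap
    exact lt_of_lt_of_le hgap habs
  have hfin : ε^2 < Δ := by nlinarith
  rw [energyK_refine hk hWm hWb hP hS]
  have : ∑ f' : Fin k → ι × (Fin k → Bool), cellVol hk (refineP P S) f' *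
      (cellAvgK hk W (refineP P S) f' - cellAvgK hk W P (parC f'))^2 = Δ := rfl
  rw [this]
  linarith

end AuxWR5
section AuxWR6

set_option linter.unusedSectionVars false

variable {k : ℕ}

lemma volume_Iio_I {c : ℝ} (hc : c ∈ Set.Icc (0:ℝ) 1) :
    volume {s : I | (s:ℝ) < c} = ENNReal.ofReal c := by
  have hmeas : MeasurableSet (Set.Icc (0:ℝ) 1) := measurableSet_Icc
  have himg : (Subtype.val '' {s : I | (s:ℝ) < c}) = Set.Ico 0 c := by
    ext y
    constructor
    · rintro ⟨t, ht, rfl⟩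
      exact ⟨t.2.1, ht⟩
    · intro hy
      exact ⟨⟨y, hy.1, le_of_lt (lt_of_lt_of_le hy.2 hc.2)⟩, hy.2, rfl⟩
  calc volume {s : I | (s:ℝ) < c}
      = volume (Subtype.val '' {s : I | (s:ℝ) < c}) := by
        rw [show (volume : Measure I) = volume.comap Subtype.val from rfl,
          comap_subtype_coe_apply hmeas]
    _ = volume (Set.Ico 0 c) := by rw [himg]
    _ = ENNReal.ofReal c := by rw [Real.volume_Ico, sub_zero]

lemma integral_indicator_Iio_I {c : ℝ} (hc : c ∈ Set.Icc (0:ℝ) 1) :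
    ∫ t : I, ({s : I | (s:ℝ) < c}).indicator (fun _ => (1:ℝ)) t = c := by
  have hmeas : MeasurableSet {s : I | (s:ℝ) < c} :=
    measurableSet_lt (by exact measurable_subtype_coe) measurable_const
  rw [MeasureTheory.integral_indicator_const _ hmeas, measureReal_def, volume_Iio_I hc, smul_eq_mul, mul_one,
    ENNReal.toReal_ofReal hc.1]

/-- Rounding: witnesses to large cut-norm integrals can be taken to be indicator functions
of (symmetric, measurable) level sets. -/
lemma rounding (hk : 1 ≤ k) {D : (PSub k → I) → ℝ} (hDm : Measurable D) (hDb : ∀ x, |D x| ≤ 1)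
    {u : Fin k → (NSub (k - 1) → I) → ℝ} (hum : ∀ j, Measurable (u j))
    (hus : ∀ j, IsSymmetricFn (u j)) (hub : ∀ j x, u j x ∈ Set.Icc (0:ℝ) 1)
    {ε : ℝ} (hε : 0 ≤ ε) (hgap : ε < |∫ x, D x * ∏ j, u j (projMiss hk j x)|) :
    ∃ S : Fin k → Set (NSub (k - 1) → I), (∀ j, MeasurableSet (S j)) ∧ (∀ j, IsSymmSet (S j)) ∧
      ε < |∫ x, D x * ∏ j, (S j).indicator (fun _ => (1:ℝ)) (projMiss hk j x)| := by
  classical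
  by_contra hcon
  push_neg at hcon
  -- the level sets
  set Slev : (Fin k → I) → Fin k → Set (NSub (k - 1) → I) :=
    fun t j => {y | (t j : ℝ) < u j y} with hSdef
  have hSmeas : ∀ t j, MeasurableSet (Slev t j) :=
    fun t j => measurableSet_lt measurable_const (hum j)
  have hSsymm : ∀ t j, IsSymmSet (Slev t j) := by
    intro t j τ y hy
    simpa only [Slev, Set.mem_setOf_eq, hus j τ y] using hy
  have hbound : ∀ t : Fin k → I,
      |∫ x, D x * ∏ j, (Slev t j).indicator (fun _ => (1:ℝ)) (projMiss hk j x)| ≤ ε :=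
    fun t => hcon (Slev t) (hSmeas t) (hSsymm t)
  -- the joint function
  set G : ((PSub k → I) × (Fin k → I)) → ℝ :=
    fun z => D z.1 * ∏ j, (Slev z.2 j).indicator (fun _ => (1:ℝ)) (projMiss hk j z.1)
    with hGdef
  have hGm : Measurable G := by
    refine (hDm.comp measurable_fst).mul (Finset.measurable_prod _ fun j _ => ?_)
    have hset : MeasurableSet {z : (PSub k → I) × (Fin k → I) |
        ((z.2 j : I) : ℝ) < u j (projMiss hk j z.1)} := by
      refine measurableSet_lt ?_ ?_
      · exact measurable_subtype_coe.comp ((measurable_pi_apply j).comp measurable_snd)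
      · exact (hum j).comp ((measurable_projMiss hk j).comp measurable_fst)
    have : (fun z : (PSub k → I) × (Fin k → I) =>
        (Slev z.2 j).indicator (fun _ => (1:ℝ)) (projMiss hk j z.1))
        = Set.indicator {z : (PSub k → I) × (Fin k → I) |
            ((z.2 j : I) : ℝ) < u j (projMiss hk j z.1)} (fun _ => (1:ℝ)) := by
      funext z
      by_cases h : ((z.2 j : I) : ℝ) < u j (projMiss hk j z.1) <;>
        simp [Slev, Set.indicator_apply, Set.mem_setOf_eq, h]
    rw [this]
    exact measurable_const.indicator hset
  have hGb : ∀ z, |G z| ≤ 1 := by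
    intro z
    rw [hGdef, abs_mul]
    have h1 : |∏ j, (Slev z.2 j).indicator (fun _ => (1:ℝ)) (projMiss hk j z.1)| ≤ 1 := by
      rw [abs_le]
      constructor
      · have : (0:ℝ) ≤ ∏ j, (Slev z.2 j).indicator (fun _ => (1:ℝ)) (projMiss hk j z.1) :=
          Finset.prod_nonneg fun j _ => Set.indicator_nonneg (fun _ _ => zero_le_one) _
        linarith
      · refine Finset.prod_le_one
          (fun j _ => Set.indicator_nonneg (fun _ _ => zero_le_one) _) (fun j _ => ?_)
        by_cases h : projMiss hk j z.1 ∈ Slev z.2 j <;> simp [h]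
    calc |D z.1| * |∏ j, (Slev z.2 j).indicator (fun _ => (1:ℝ)) (projMiss hk j z.1)|
        ≤ 1 * 1 := mul_le_mul (hDb z.1) h1 (abs_nonneg _) zero_le_one
      _ = 1 := one_mul 1
  have hGi : Integrable G := integrable_of_bdd hGm hGb
  -- pointwise identity: ∏ u_j = ∫_t ∏ indicators
  have hpt : ∀ x : PSub k → I, D x * ∏ j, u j (projMiss hk j x) = ∫ t : Fin k → I, G (x, t) := by
    intro x
    have h1 : ∫ t : Fin k → I, (∏ j, ({s : I | (s:ℝ) < u j (projMiss hk j x)}).indicator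
          (fun _ => (1:ℝ)) (t j)) = ∏ j, u j (projMiss hk j x) := by
      rw [MeasureTheory.volume_pi, MeasureTheory.integral_fintype_prod_eq_prod (𝕜 := ℝ)
        (f := fun j (s : I) => ({s' : I | (s':ℝ) < u j (projMiss hk j x)}).indicator
          (fun _ => (1:ℝ)) s)]
      exact Finset.prod_congr rfl fun j _ => integral_indicator_Iio_I (hub j _)
    have h2 : ∀ t : Fin k → I, G (x, t)
        = D x * ∏ j, ({s : I | (s:ℝ) < u j (projMiss hk j x)}).indicator
            (fun _ => (1:ℝ)) (t j) := by
      intro t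
      show D x * _ = D x * _
      refine congrArg (fun r => D x * r) (Finset.prod_congr rfl fun j _ => ?_)
      by_cases h : (t j : ℝ) < u j (projMiss hk j x) <;>
        simp [Slev, Set.indicator_apply, Set.mem_setOf_eq, h]
    rw [funext h2, MeasureTheory.integral_const_mul, h1]
  -- Fubini
  have hGi' : Integrable (Function.uncurry fun x t => G (x, t))
      (volume.prod volume) := by
    have : (Function.uncurry fun x t => G (x, t)) = G := rfl
    rw [this, ← MeasureTheory.Measure.volume_eq_prod]
    exact hGi
  have hswap : ∫ x, ∫ t : Fin k → I, G (x, t) = ∫ t : Fin k → I, ∫ x, G (x, t) :=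
    MeasureTheory.integral_integral_swap hGi'
  have hfinal : |∫ x, D x * ∏ j, u j (projMiss hk j x)| ≤ ε := by
    rw [funext hpt, hswap]
    have := MeasureTheory.norm_integral_le_of_norm_le_const
      (μ := (volume : Measure (Fin k → I))) (f := fun t => ∫ x, G (x, t)) (C := ε)
      (Filter.Eventually.of_forall fun t => by
        simpa [Real.norm_eq_abs] using hbound t)
    simpa [Real.norm_eq_abs, measure_univ] using this
  exact absurd hgap (not_lt.mpr hfinal)

end AuxWR6
section AuxWR7

set_option linter.unusedSectionVars false

variable {k : ℕ} {ι ι' : Type*} [Fintype ι] [DecidableEq ι] [Fintype ι'] [DecidableEq ι']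

lemma IsMPartition.reindex {j : ℕ} {P : ι → Set (NSub j → I)} (hP : IsMPartition P)
    (e : ι' ≃ ι) : IsMPartition (P ∘ e) := by
  refine ⟨fun a => hP.1 (e a), fun a b hab => hP.2.1 (fun h => hab (e.injective h)), ?_⟩
  refine Set.eq_univ_of_forall fun y => ?_
  have : y ∈ ⋃ a, P a := hP.2.2 ▸ Set.mem_univ y
  obtain ⟨a, ha⟩ := Set.mem_iUnion.mp this
  exact Set.mem_iUnion.mpr ⟨e.symm a, by simpa [Function.comp] using ha⟩

lemma IsSymmPartition.reindex {j : ℕ} {P : ι → Set (NSub j → I)} (hP : IsSymmPartition P)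
    (e : ι' ≃ ι) : IsSymmPartition (P ∘ e) :=
  ⟨hP.1.reindex e, fun a => hP.2 (e a)⟩

lemma cellK_reindex (hk : 1 ≤ k) (P : ι → Set (NSub (k - 1) → I)) (e : ι' ≃ ι)
    (f : Fin k → ι') : cellK hk (P ∘ e) f = cellK hk P (fun i => e (f i)) := rfl

lemma stepK_reindex (hk : 1 ≤ k) (W : (PSub k → I) → ℝ) (P : ι → Set (NSub (k - 1) → I))
    (e : ι' ≃ ι) : stepK hk W (P ∘ e) = stepK hk W P := by
  funext x
  unfold stepK
  refine Fintype.sum_equiv (Equiv.piCongrRight fun _ => e) _ _ fun f => ?_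
  have h1 : cellK hk (P ∘ e) f = cellK hk P ((Equiv.piCongrRight fun _ => e) f) := rfl
  have h2 : cellAvgK hk W (P ∘ e) f = cellAvgK hk W P ((Equiv.piCongrRight fun _ => e) f) := by
    unfold cellAvgK; rw [h1]
  rw [h1, h2]

lemma energyK_reindex (hk : 1 ≤ k) (W : (PSub k → I) → ℝ) (P : ι → Set (NSub (k - 1) → I))
    (e : ι' ≃ ι) : energyK hk W (P ∘ e) = energyK hk W P := by
  unfold energyK
  refine Fintype.sum_equiv (Equiv.piCongrRight fun _ => e) _ _ fun f => ?_
  have h1 : cellK hk (P ∘ e) f = cellK hk P ((Equiv.piCongrRight fun _ => e) f) := rfl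
  have h2 : cellAvgK hk W (P ∘ e) f = cellAvgK hk W P ((Equiv.piCongrRight fun _ => e) f) := by
    unfold cellAvgK; rw [h1]
  unfold cellVol
  rw [h1, h2]

/-- The concrete equivalence used when appending one refinement stage. -/
def snocEquiv (q T : ℕ) (B : Type*) :
    Fin q × (Fin (T + 1) → B) ≃ (Fin q × (Fin T → B)) × B where
  toFun p := ((p.1, fun t => p.2 t.castSucc), p.2 (Fin.last T))
  invFun w := (w.1.1, Fin.snoc w.1.2 w.2)
  left_inv p := by
    refine Prod.ext rfl ?_
    funext t
    refine Fin.lastCases ?_ (fun t0 => ?_) t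
    · simp
    · simp
  right_inv w := by
    refine Prod.ext (Prod.ext rfl ?_) ?_
    · funext t
      simp
    · simp

end AuxWR7
section AuxWR8

set_option linter.unusedSectionVars false

/-- Main recursion: the energy increment argument. -/
lemma regularity_rec {k m q : ℕ} (hk : 1 ≤ k) {ε : ℝ} (hε : 0 < ε)
    (W : Fin m → ((PSub k → I) → ℝ)) (hW : ∀ i, IsHypergraphon (W i))
    (Q : Fin q → Set (NSub (k - 1) → I)) :
    ∀ n : ℕ, ∀ T : ℕ, ∀ P : Fin q × (Fin T → Fin k → Bool) → Set (NSub (k - 1) → I),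
      IsSymmPartition P → (∀ p, P p ⊆ Q p.1) →
      ((T : ℝ) * ε^2 ≤ ∑ i, energyK hk (W i) P) →
      ((m : ℝ) < ∑ i, energyK hk (W i) P + n * ε^2) →
      ∃ (T' : ℕ) (P' : Fin q × (Fin T' → Fin k → Bool) → Set (NSub (k - 1) → I)),
        IsSymmPartition P' ∧ (∀ p, P' p ⊆ Q p.1) ∧
        ((T' : ℝ) * ε^2 ≤ ∑ i, energyK hk (W i) P') ∧
        ∀ i, ∀ u : Fin k → ((NSub (k - 1) → I) → ℝ),
          (∀ j, Measurable (u j)) → (∀ j, IsSymmetricFn (u j)) →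
          (∀ j x, u j x ∈ Set.Icc (0:ℝ) 1) →
          |∫ x, (W i x - stepK hk (W i) P' x) * ∏ j, u j (projMiss hk j x)| ≤ ε := by
  classical
  have hWm : ∀ i, Measurable (W i) := fun i => (hW i).1
  have hWicc : ∀ i x, W i x ∈ Set.Icc (0:ℝ) 1 := fun i => (hW i).2.2
  have hWb : ∀ i x, |W i x| ≤ 1 :=
    fun i x => abs_le.mpr ⟨by linarith [(hWicc i x).1], (hWicc i x).2⟩
  intro n
  induction n with
  | zero =>
    intro T P hP _ _ hbudget
    exfalso
    have hle : ∑ i, energyK hk (W i) P ≤ (m:ℝ) := by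
      calc ∑ i, energyK hk (W i) P ≤ ∑ _i : Fin m, (1:ℝ) :=
            Finset.sum_le_sum fun i _ => energyK_le_one hk (hWm i) (hWicc i) hP.1
        _ = (m:ℝ) := by simp
    push_cast at hbudget
    linarith
  | succ n ih =>
    intro T P hP hPsub hinv hbudget
    by_cases hgood : ∀ i, ∀ u : Fin k → ((NSub (k - 1) → I) → ℝ),
        (∀ j, Measurable (u j)) → (∀ j, IsSymmetricFn (u j)) →
        (∀ j x, u j x ∈ Set.Icc (0:ℝ) 1) →
        |∫ x, (W i x - stepK hk (W i) P x) * ∏ j, u j (projMiss hk j x)| ≤ ε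
    · exact ⟨T, P, hP, hPsub, hinv, hgood⟩
    push_neg at hgood
    obtain ⟨i₀, u, hum, hus, hub, hgap⟩ := hgood
    -- round the witness functions to symmetric measurable sets
    have hsPm : Measurable (stepK hk (W i₀) P) := measurable_stepK hk hP.1.1
    have hsPicc := stepK_mem_Icc hk (hWm i₀) (hWicc i₀) hP.1
    have hDb : ∀ x, |W i₀ x - stepK hk (W i₀) P x| ≤ 1 := by
      intro x
      have h1 := hWicc i₀ x
      have h2 := hsPicc x
      rw [abs_le]
      constructor <;> [linarith [h1.1, h2.2]; linarith [h1.2, h2.1]]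
    obtain ⟨S, hSm, hSs, hgap'⟩ :=
      rounding hk ((hWm i₀).sub hsPm) hDb hum hus hub hε.le hgap
    -- refine and reindex
    set P'' := refineP P S with hP''def
    have hP''symm : IsSymmPartition P'' := refineP_isSymmPartition hP hSm hSs
    set e := snocEquiv q T (Fin k → Bool) with hedef
    set Pnew : Fin q × (Fin (T + 1) → Fin k → Bool) → Set (NSub (k - 1) → I)
      := P'' ∘ e with hPnewdef
    have hPnewsymm : IsSymmPartition Pnew := hP''symm.reindex e
    have hPnewsub : ∀ p, Pnew p ⊆ Q p.1 := by
      intro p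
      calc Pnew p ⊆ P (e p).1 := refineP_subset P S (e p)
        _ ⊆ Q (e p).1.1 := hPsub (e p).1
    -- energy accounting
    have hEnew : ∀ i, energyK hk (W i) Pnew = energyK hk (W i) P'' :=
      fun i => energyK_reindex hk (W i) P'' e
    have hmono : ∀ i, energyK hk (W i) P ≤ energyK hk (W i) P'' :=
      fun i => energyK_mono_refine hk (hWm i) (hWb i) hP.1 hSm
    have hinc : energyK hk (W i₀) P + ε^2 < energyK hk (W i₀) P'' :=
      energy_increment_s10 hk (hWm i₀) (hWb i₀) hP.1 hSm hε.le hgap'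
    have hsumE : ∑ i, energyK hk (W i) P + ε^2 ≤ ∑ i, energyK hk (W i) Pnew := by
      have h1 : ∑ i, (energyK hk (W i) P + if i = i₀ then ε^2 else 0)
          ≤ ∑ i, energyK hk (W i) P'' := by
        refine Finset.sum_le_sum fun i _ => ?_
        by_cases h : i = i₀
        · subst h; rw [if_pos rfl]; linarith
        · rw [if_neg h]; linarith [hmono i]
      have h2 : ∑ i, (energyK hk (W i) P + if i = i₀ then ε^2 else 0)
          = ∑ i, energyK hk (W i) P + ε^2 := by
        rw [Finset.sum_add_distrib, Finset.sum_ite_eq' Finset.univ i₀ (fun _ => ε^2)]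
        simp
      rw [Finset.sum_congr rfl fun i _ => hEnew i]
      linarith [h1, h2.symm.le]
    -- apply the induction hypothesis
    have hinv' : ((T + 1 : ℕ) : ℝ) * ε^2 ≤ ∑ i, energyK hk (W i) Pnew := by
      push_cast
      linarith
    have hbudget' : (m : ℝ) < ∑ i, energyK hk (W i) Pnew + n * ε^2 := by
      push_cast at hbudget ⊢
      linarith
    exact ih (T + 1) Pnew hPnewsymm hPnewsub hinv' hbudget'

end AuxWR8
section AuxWR9

lemma cutNormK_le_of_forall {k : ℕ} (hk : 1 ≤ k) {D : (PSub k → I) → ℝ} {ε : ℝ} (hε : 0 ≤ ε)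
    (h : ∀ u : Fin k → ((NSub (k - 1) → I) → ℝ),
      (∀ j, Measurable (u j)) → (∀ j, IsSymmetricFn (u j)) →
      (∀ j x, u j x ∈ Set.Icc (0:ℝ) 1) →
      |∫ x, D x * ∏ j, u j (projMiss hk j x)| ≤ ε) :
    cutNormK hk D ≤ ε := by
  refine Real.sSup_le ?_ hε
  rintro r ⟨u, h1, h2, h3, rfl⟩
  exact h u h1 h2 h3

end AuxWR9
/-- Weak regularity lemma for tuples of hypergraphons: given `k ≥ 2`,
`ε > 0`, hypergraphons `W_1,…,W_m` and a symmetric partition `Q` of `[0,1]^{r[k-1]}`,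
there is a symmetric partition `Q'` refining `Q`, each part of `Q` split into at most
`⌈2^(km/ε²)⌉` parts, with `‖W_i − (W_i)_{Q'}‖_{□^{k-1}} ≤ ε` for all `i`. -/
theorem weak_regularity_tuples {k m q : ℕ} (hk : 2 ≤ k) (ε : ℝ) (hε : 0 < ε)
    (W : Fin m → ((PSub k → I) → ℝ)) (hW : ∀ i, IsHypergraphon (W i))
    (Q : Fin q → Set (NSub (k - 1) → I)) (hQ : IsSymmPartition Q) :
    ∃ (r : ℕ) (Q' : Fin q × Fin r → Set (NSub (k - 1) → I)),
      (r : ℝ) ≤ ⌈(2 : ℝ) ^ ((k * m : ℝ) / ε ^ 2)⌉₊ ∧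
      IsSymmPartition Q' ∧ (∀ p : Fin q × Fin r, Q' p ⊆ Q p.1) ∧
      ∀ i, cutNormK (by omega : 1 ≤ k)
        (fun x => W i x - stepK (by omega : 1 ≤ k) (W i) Q' x) ≤ ε := by
  classical
  have hk1 : 1 ≤ k := by omega
  have hWm : ∀ i, Measurable (W i) := fun i => (hW i).1
  have hWicc : ∀ i x, W i x ∈ Set.Icc (0:ℝ) 1 := fun i => (hW i).2.2
  -- initial partition, trivially indexed
  set P₀ : Fin q × (Fin 0 → Fin k → Bool) → Set (NSub (k - 1) → I) :=
    fun p => Q p.1 with hP₀def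
  have hP₀symm : IsSymmPartition P₀ := by
    refine ⟨⟨fun p => hQ.1.1 p.1, ?_, ?_⟩, fun p => hQ.2 p.1⟩
    · intro p p' hne
      have h1 : p.1 ≠ p'.1 := by
        intro h
        exact hne (Prod.ext h (funext fun t => t.elim0))
      exact hQ.1.2.1 h1
    · refine Set.eq_univ_of_forall fun y => ?_
      have : y ∈ ⋃ a, Q a := hQ.1.2.2 ▸ Set.mem_univ y
      obtain ⟨a, ha⟩ := Set.mem_iUnion.mp this
      exact Set.mem_iUnion.mpr ⟨(a, fun t => t.elim0), ha⟩
  have hP₀sub : ∀ p, P₀ p ⊆ Q p.1 := fun p => subset_rfl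
  have hε2 : (0:ℝ) < ε^2 := by positivity
  -- budget
  set n₀ : ℕ := ⌈(m:ℝ)/ε^2⌉₊ + 1 with hn₀def
  have hceil : (m:ℝ)/ε^2 ≤ (⌈(m:ℝ)/ε^2⌉₊ : ℝ) := Nat.le_ceil _
  have hm0 : (m:ℝ) ≤ (⌈(m:ℝ)/ε^2⌉₊ : ℝ) * ε^2 := by
    calc (m:ℝ) = ((m:ℝ)/ε^2) * ε^2 := by field_simp
      _ ≤ (⌈(m:ℝ)/ε^2⌉₊ : ℝ) * ε^2 := mul_le_mul_of_nonneg_right hceil hε2.le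
  have hE₀ : (0:ℝ) ≤ ∑ i, energyK hk1 (W i) P₀ :=
    Finset.sum_nonneg fun i _ => energyK_nonneg hk1 (W i) P₀
  have hbudget : (m:ℝ) < ∑ i, energyK hk1 (W i) P₀ + (n₀:ℕ) * ε^2 := by
    have : ((n₀:ℕ) : ℝ) * ε^2 = (⌈(m:ℝ)/ε^2⌉₊ : ℝ) * ε^2 + ε^2 := by
      rw [hn₀def]; push_cast; ring
    rw [this]
    linarith
  have hinv₀ : ((0:ℕ) : ℝ) * ε^2 ≤ ∑ i, energyK hk1 (W i) P₀ := by
    simpa using hE₀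
  obtain ⟨T', P', hP'symm, hP'sub, hinv', hcut⟩ :=
    regularity_rec hk1 hε W hW Q n₀ 0 P₀ hP₀symm hP₀sub hinv₀ hbudget
  -- final reindexing to `Fin q × Fin r`
  have hcard : Fintype.card (Fin T' → Fin k → Bool) = 2 ^ (k * T') := by
    rw [Fintype.card_fun, Fintype.card_fun]
    simp [pow_mul, mul_comm]
  set r : ℕ := 2 ^ (k * T') with hrdef
  set eB : Fin r ≃ (Fin T' → Fin k → Bool) := (Fintype.equivFinOfCardEq hcard).symm with heBdef
  set e2 : Fin q × Fin r ≃ Fin q × (Fin T' → Fin k → Bool) :=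
    Equiv.prodCongr (Equiv.refl (Fin q)) eB with he2def
  refine ⟨r, P' ∘ e2, ?_, hP'symm.reindex e2, ?_, ?_⟩
  · -- the cardinality bound
    have hEm : ∑ i, energyK hk1 (W i) P' ≤ (m:ℝ) := by
      calc ∑ i, energyK hk1 (W i) P' ≤ ∑ _i : Fin m, (1:ℝ) :=
            Finset.sum_le_sum fun i _ => energyK_le_one hk1 (hWm i) (hWicc i) hP'symm.1
        _ = (m:ℝ) := by simp
    have hT'le : (T' : ℝ) ≤ (m:ℝ) / ε^2 := by
      rw [le_div_iff₀ hε2]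
      linarith [hinv', hEm]
    have hexp : ((k * T' : ℕ) : ℝ) ≤ (k * m : ℝ) / ε^2 := by
      push_cast
      calc (k:ℝ) * T' ≤ (k:ℝ) * ((m:ℝ)/ε^2) :=
            mul_le_mul_of_nonneg_left hT'le (Nat.cast_nonneg k)
        _ = (k * m : ℝ) / ε^2 := by ring
    calc (r : ℝ) = (2:ℝ) ^ (k * T') := by rw [hrdef]; push_cast; ring
      _ = (2:ℝ) ^ ((k * T' : ℕ) : ℝ) := (Real.rpow_natCast 2 (k * T')).symm
      _ ≤ (2:ℝ) ^ ((k * m : ℝ) / ε^2) :=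
          Real.rpow_le_rpow_of_exponent_le one_le_two hexp
      _ ≤ (⌈(2 : ℝ) ^ ((k * m : ℝ) / ε ^ 2)⌉₊ : ℝ) := Nat.le_ceil _
  · -- refines Q
    intro p
    exact hP'sub (e2 p)
  · -- the cut norm bounds
    intro i
    refine cutNormK_le_of_forall hk1 hε.le fun u h1 h2 h3 => ?_
    have hstep : stepK hk1 (W i) (P' ∘ e2) = stepK hk1 (W i) P' :=
      stepK_reindex hk1 (W i) P' e2
    have := hcut i u h1 h2 h3
    calc |∫ x, (W i x - stepK hk1 (W i) (P' ∘ e2) x) * ∏ j, u j (projMiss hk1 j x)|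
        = |∫ x, (W i x - stepK hk1 (W i) P' x) * ∏ j, u j (projMiss hk1 j x)| := by
          rw [hstep]
      _ ≤ ε := this

end
end
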